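/- arXiv:1702.06443 — 13 statements merged into one kernel-verified Lean document; each statement's English description precedes it below -/
import Mathlib

section
/- If φ : ℝ^d → ℝ is continuous with compact support and has global linear independence, and f = Σ_{k∈ℤ^d} c(k) φ(·−k) ∈ V(φ) is nonseparable (i.e., f cannot be written as f = f₁ + f₂ with f₁, f₂ ∈ V(φ), f₁ ≠ 0, f₂ ≠ 0, and f₁·f₂ ≡ 0 on ℝ^d), then the graph 𝒢_f is connected. -/
/-- The signal `Σ_k c(k) φ(·−k)` in the shift-invariant space `V(φ)`. -/
noncomputable def sig (d : ℕ) (φ : (Fin d → ℝ) → ℝ) (c : (Fin d → ℤ) → ℝ) :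
    (Fin d → ℝ) → ℝ :=
  fun x => ∑' k : Fin d → ℤ, c k * φ (fun i => x i - k i)

/-- `f = Σ_k c(k) φ(·−k)` is nonseparable: it is not the sum of two nonzero signals of
`V(φ)` whose pointwise product vanishes identically. -/
def Nonseparable (d : ℕ) (φ : (Fin d → ℝ) → ℝ) (c : (Fin d → ℤ) → ℝ) : Prop :=
  ¬ ∃ c₁ c₂ : (Fin d → ℤ) → ℝ,
      sig d φ c₁ ≠ 0 ∧ sig d φ c₂ ≠ 0 ∧
      (∀ x, sig d φ c x = sig d φ c₁ x + sig d φ c₂ x) ∧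
      (∀ x, sig d φ c₁ x * sig d φ c₂ x = 0)

/-- The adjacency relation of the graph `𝒢_f` for `f = Σ_k c(k) φ(·−k)`:
vertices are the `k` with `c k ≠ 0`, and `k, k'` are adjacent when the supports of
`φ(·−k)` and `φ(·−k')` overlap. -/
def GraphAdj (d : ℕ) (φ : (Fin d → ℝ) → ℝ) (c : (Fin d → ℤ) → ℝ)
    (k k' : Fin d → ℤ) : Prop :=
  k ≠ k' ∧ c k ≠ 0 ∧ c k' ≠ 0 ∧
    ∃ x : Fin d → ℝ, φ (fun i => x i - k i) * φ (fun i => x i - k' i) ≠ 0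

open Classical in
lemma term_support_finite (d : ℕ) (φ : (Fin d → ℝ) → ℝ) (hsupp : HasCompactSupport φ)
    (c : (Fin d → ℤ) → ℝ) (x : Fin d → ℝ) :
    (Function.support fun k : Fin d → ℤ => c k * φ (fun i => x i - k i)).Finite := by
  obtain ⟨C, hC⟩ := (hsupp.isCompact.isBounded).exists_norm_le
  have : (Function.support fun k : Fin d → ℤ => c k * φ (fun i => x i - k i)) ⊆
      Set.pi Set.univ (fun i => (Set.Icc ⌈x i - C⌉ ⌊x i + C⌋ : Set ℤ)) := by
    intro k hk
    have hφ : φ (fun i => x i - k i) ≠ 0 := fun h => hk (by simp [h])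
    have hmem : (fun i => x i - (k i : ℝ)) ∈ tsupport φ :=
      subset_tsupport φ hφ
    have hnorm := hC _ hmem
    intro i _
    have h1 : |x i - (k i : ℝ)| ≤ C := by
      have h2 := norm_le_pi_norm (fun i => x i - (k i : ℝ)) i
      simp only [Real.norm_eq_abs] at h2
      exact h2.trans hnorm
    rw [abs_le] at h1
    constructor
    · rw [Int.ceil_le]; linarith [h1.2]
    · rw [Int.le_floor]; linarith [h1.1]
  exact Set.Finite.subset (Set.Finite.pi fun i => Set.finite_Icc _ _) this

lemma sig_summable (d : ℕ) (φ : (Fin d → ℝ) → ℝ) (hsupp : HasCompactSupport φ)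
    (c : (Fin d → ℤ) → ℝ) (x : Fin d → ℝ) :
    Summable (fun k : Fin d → ℤ => c k * φ (fun i => x i - k i)) := by
  have h := term_support_finite d φ hsupp c x
  exact summable_of_ne_finset_zero (s := h.toFinset) (by
    intro k hk
    by_contra h0
    exact hk (h.mem_toFinset.2 h0))

/-- if `φ` is continuous with compact support and globally linearly
independent, and `f = Σ_k c(k) φ(·−k)` is nonseparable, then the graph `𝒢_f` is
connected. -/
theorem stmt1 (d : ℕ) (φ : (Fin d → ℝ) → ℝ)
    (hcont : Continuous φ) (hsupp : HasCompactSupport φ)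
    (hGLI : ∀ c : (Fin d → ℤ) → ℝ, (∀ x, sig d φ c x = 0) → ∀ k, c k = 0)
    (c : (Fin d → ℤ) → ℝ) (hns : Nonseparable d φ c) :
    ∀ k k' : Fin d → ℤ, c k ≠ 0 → c k' ≠ 0 →
      Relation.ReflTransGen (GraphAdj d φ c) k k' := by
  classical
  intro k k' hk hk'
  by_contra hcon
  set P : (Fin d → ℤ) → Prop := fun j => Relation.ReflTransGen (GraphAdj d φ c) k j with hP
  set c₁ : (Fin d → ℤ) → ℝ := fun j => if P j then c j else 0 with hc₁
  set c₂ : (Fin d → ℤ) → ℝ := fun j => if P j then 0 else c j with hc₂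
  apply hns
  refine ⟨c₁, c₂, ?_, ?_, ?_, ?_⟩
  · intro h0
    have := hGLI c₁ (fun x => congrFun h0 x) k
    rw [hc₁] at this
    simp only [if_pos (show P k from Relation.ReflTransGen.refl)] at this
    exact hk this
  · intro h0
    have := hGLI c₂ (fun x => congrFun h0 x) k'
    rw [hc₂] at this
    simp only [if_neg (show ¬ P k' from hcon)] at this
    exact hk' this
  · intro x
    unfold sig
    rw [← Summable.tsum_add (sig_summable d φ hsupp c₁ x) (sig_summable d φ hsupp c₂ x)]
    congr 1
    funext j
    by_cases hj : P j <;> simp [hc₁, hc₂, hj] <;> ring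
  · intro x
    by_contra hx
    obtain ⟨h1, h2⟩ := mul_ne_zero_iff.1 hx
    have e1 : ∃ j, c₁ j * φ (fun i => x i - j i) ≠ 0 := by
      by_contra h
      push_neg at h
      exact h1 (by unfold sig; simp [h])
    have e2 : ∃ j, c₂ j * φ (fun i => x i - j i) ≠ 0 := by
      by_contra h
      push_neg at h
      exact h2 (by unfold sig; simp [h])
    obtain ⟨j₁, hj₁⟩ := e1
    obtain ⟨j₂, hj₂⟩ := e2
    obtain ⟨hcj₁, hφ₁⟩ := mul_ne_zero_iff.1 hj₁
    obtain ⟨hcj₂, hφ₂⟩ := mul_ne_zero_iff.1 hj₂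
    have hPj₁ : P j₁ := by
      by_contra h; rw [hc₁] at hcj₁; simp [h] at hcj₁
    have hPj₂ : ¬ P j₂ := by
      by_contra h; rw [hc₂] at hcj₂; simp [h] at hcj₂
    have hcj₁' : c j₁ ≠ 0 := by simpa [hc₁, hPj₁] using hcj₁
    have hcj₂' : c j₂ ≠ 0 := by simpa [hc₂, hPj₂] using hcj₂
    have hne : j₁ ≠ j₂ := fun h => hPj₂ (h ▸ hPj₁)
    exact hPj₂ (hPj₁.tail ⟨hne, hcj₁', hcj₂', x, mul_ne_zero hφ₁ hφ₂⟩)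
end

section
/- If φ : ℝ^d → ℝ is continuous with compact support and has local linear independence on every open set, and f ∈ V(φ) has connected graph 𝒢_f, then f is nonseparable. -/
lemma finF (d : ℕ) (φ : (Fin d → ℝ) → ℝ) (hsupp : HasCompactSupport φ) (x : Fin d → ℝ) :
    ∃ F : Finset (Fin d → ℤ), ∀ (y : Fin d → ℝ), dist y x ≤ 1 →
      ∀ k ∉ F, φ (fun i => y i - k i) = 0 := by
  obtain ⟨R, hR⟩ : ∃ R, tsupport φ ⊆ Metric.closedBall 0 R :=
    hsupp.isCompact.isBounded.subset_closedBall 0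
  set S : Set (Fin d → ℤ) :=
    Set.pi Set.univ (fun i => (Finset.Icc ⌈x i - (R+1)⌉ ⌊x i + (R+1)⌋ : Set ℤ)) with hS
  have hfin : S.Finite := Set.Finite.pi (fun i => (Finset.Icc _ _).finite_toSet)
  refine ⟨hfin.toFinset, ?_⟩
  intro y hy k hk
  by_contra h
  apply hk
  rw [Set.Finite.mem_toFinset]
  intro i _
  have hmem : (fun i => y i - (k i : ℝ)) ∈ tsupport φ := subset_closure h
  have h1 : |y i - (k i : ℝ)| ≤ R := by
    have := hR hmem
    rw [Metric.mem_closedBall] at this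
    calc |y i - (k i : ℝ)| = dist ((fun i => y i - (k i:ℝ)) i) ((0 : Fin d → ℝ) i) := by
          simp [Real.dist_eq]
      _ ≤ dist (fun i => y i - (k i:ℝ)) (0 : Fin d → ℝ) := dist_le_pi_dist (fun i => y i - (k i:ℝ)) (0 : Fin d → ℝ) i
      _ ≤ R := this
  have h2 : |x i - y i| ≤ 1 := by
    calc |x i - y i| = dist (x i) (y i) := (Real.dist_eq _ _).symm
      _ ≤ dist x y := dist_le_pi_dist x y i
      _ ≤ 1 := by rwa [dist_comm]
  have h3 : |x i - (k i : ℝ)| ≤ R + 1 := by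
    have : x i - (k i:ℝ) = (x i - y i) + (y i - k i) := by ring
    rw [this]
    calc |(x i - y i) + (y i - (k i:ℝ))| ≤ |x i - y i| + |y i - (k i:ℝ)| := abs_add_le _ _
      _ ≤ 1 + R := add_le_add h2 h1
      _ = R + 1 := by ring
  rw [abs_le] at h3
  simp only [Finset.coe_Icc, Set.mem_Icc]
  constructor
  · rw [Int.ceil_le]; linarith [h3.2]
  · rw [Int.le_floor]; linarith [h3.1]

lemma sig_eq_sum (d : ℕ) (φ : (Fin d → ℝ) → ℝ) (c : (Fin d → ℤ) → ℝ)
    (F : Finset (Fin d → ℤ)) (y : Fin d → ℝ)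
    (hF : ∀ k ∉ F, φ (fun i => y i - k i) = 0) :
    sig d φ c y = ∑ k ∈ F, c k * φ (fun i => y i - k i) :=
  tsum_eq_sum (fun k hk => by rw [hF k hk, mul_zero])

lemma sig_cont (d : ℕ) (φ : (Fin d → ℝ) → ℝ) (hcont : Continuous φ)
    (hsupp : HasCompactSupport φ) (c : (Fin d → ℤ) → ℝ) :
    Continuous (sig d φ c) := by
  rw [continuous_iff_continuousAt]
  intro x
  obtain ⟨F, hF⟩ := finF d φ hsupp x
  have hc : ContinuousAt (fun y => ∑ k ∈ F, c k * φ (fun i => y i - k i)) x := by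
    apply Continuous.continuousAt
    apply continuous_finset_sum
    intro k _
    exact continuous_const.mul (hcont.comp
      (continuous_pi (fun i => (continuous_apply i).sub continuous_const)))
  apply hc.congr
  filter_upwards [Metric.ball_mem_nhds x one_pos] with y hy
  exact (sig_eq_sum d φ c F y (hF y (le_of_lt (Metric.mem_ball.mp hy)))).symm

/-- `φ` has local linear independence on the open set `A`. -/
def LocLinIndep (d : ℕ) (φ : (Fin d → ℝ) → ℝ) (A : Set (Fin d → ℝ)) : Prop :=
  ∀ c : (Fin d → ℤ) → ℝ, (∀ x ∈ A, sig d φ c x = 0) →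
    ∀ k : Fin d → ℤ, (¬ ∀ x ∈ A, φ (fun i => x i - k i) = 0) → c k = 0

lemma key (d : ℕ) (φ : (Fin d → ℝ) → ℝ)
    (hcont : Continuous φ) (hsupp : HasCompactSupport φ)
    (hLLI : ∀ A : Set (Fin d → ℝ), IsOpen A → LocLinIndep d φ A)
    (c₁ c₂ : (Fin d → ℤ) → ℝ)
    (hmul : ∀ x, sig d φ c₁ x * sig d φ c₂ x = 0)
    (k k' : Fin d → ℤ) (hk : c₁ k ≠ 0) (hk' : c₂ k' ≠ 0)
    (x₀ : Fin d → ℝ)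
    (hov : φ (fun i => x₀ i - k i) * φ (fun i => x₀ i - k' i) ≠ 0) : False := by
  -- the open sets where f₁ resp. f₂ do not vanish
  set U : Set (Fin d → ℝ) := {x | sig d φ c₁ x ≠ 0} with hU
  set V : Set (Fin d → ℝ) := {x | sig d φ c₂ x ≠ 0} with hV
  have hUopen : IsOpen U := isOpen_compl_singleton.preimage (sig_cont d φ hcont hsupp c₁)
  have hVopen : IsOpen V := isOpen_compl_singleton.preimage (sig_cont d φ hcont hsupp c₂)
  -- f₁ vanishes on V, f₂ vanishes on U
  have h1V : ∀ x ∈ V, sig d φ c₁ x = 0 := by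
    intro x hx
    by_contra h
    exact hx (by simpa [h] using hmul x)
  have h2U : ∀ x ∈ U, sig d φ c₂ x = 0 := by
    intro x hx
    by_contra h
    exact hx (by simpa [h] using hmul x)
  -- since c₁ k ≠ 0, φ(·−k) vanishes on V
  have hφkV : ∀ x ∈ V, φ (fun i => x i - k i) = 0 := by
    by_contra h
    exact hk (hLLI V hVopen c₁ h1V k h)
  have hφk'U : ∀ x ∈ U, φ (fun i => x i - k' i) = 0 := by
    by_contra h
    exact hk' (hLLI U hUopen c₂ h2U k' h)
  -- the overlap set
  set O : Set (Fin d → ℝ) :=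
    {x | φ (fun i => x i - k i) ≠ 0} ∩ {x | φ (fun i => x i - k' i) ≠ 0} with hO
  have hOopen : IsOpen O := by
    apply IsOpen.inter
    · exact isOpen_compl_singleton.preimage (hcont.comp
        (continuous_pi (fun i => (continuous_apply i).sub continuous_const)))
    · exact isOpen_compl_singleton.preimage (hcont.comp
        (continuous_pi (fun i => (continuous_apply i).sub continuous_const)))
  have hx₀ : x₀ ∈ O := ⟨left_ne_zero_of_mul hov, right_ne_zero_of_mul hov⟩
  -- O is disjoint from U and V, so f₁ = 0 on O
  have h1O : ∀ x ∈ O, sig d φ c₁ x = 0 := by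
    intro x hx
    by_contra h
    exact hx.2 (hφk'U x h)
  have hnall : ¬ ∀ x ∈ O, φ (fun i => x i - k i) = 0 := by
    intro h
    exact hx₀.1 (h x₀ hx₀)
  exact hk (hLLI O hOopen c₁ h1O k hnall)

/-- if `φ` is continuous with compact support and locally linearly
independent on every open set, and the graph `𝒢_f` of `f = Σ_k c(k) φ(·−k)` is
connected, then `f` is nonseparable. -/
theorem stmt2 (d : ℕ) (φ : (Fin d → ℝ) → ℝ)
    (hcont : Continuous φ) (hsupp : HasCompactSupport φ)
    (hLLI : ∀ A : Set (Fin d → ℝ), IsOpen A → LocLinIndep d φ A)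
    (c : (Fin d → ℤ) → ℝ)
    (hconn : ∀ k k' : Fin d → ℤ, c k ≠ 0 → c k' ≠ 0 →
      Relation.ReflTransGen (GraphAdj d φ c) k k') :
    Nonseparable d φ c := by
  rintro ⟨c₁, c₂, h1, h2, hadd, hmul⟩
  -- extract a nonzero coefficient of c₁ and a point where φ ≠ 0
  have hex : ∀ (a : (Fin d → ℤ) → ℝ), sig d φ a ≠ 0 →
      ∃ k, a k ≠ 0 ∧ ∃ z : Fin d → ℝ, φ z ≠ 0 := by
    intro a ha
    obtain ⟨x, hx⟩ := Function.ne_iff.mp ha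
    by_contra h
    push_neg at h
    apply hx
    have hz : ∀ k : Fin d → ℤ, a k * φ (fun i => x i - k i) = 0 := by
      intro k
      by_cases hak : a k = 0
      · rw [hak, zero_mul]
      · rw [h k hak (fun i => x i - k i), mul_zero]
    simp only [Pi.zero_apply]
    calc sig d φ a x = ∑' k : Fin d → ℤ, a k * φ (fun i => x i - k i) := rfl
      _ = ∑' _ : Fin d → ℤ, (0:ℝ) := by congr 1; funext k; exact hz k
      _ = 0 := tsum_zero
  obtain ⟨k₁, hk₁, z, hz⟩ := hex c₁ h1
  obtain ⟨k₂, hk₂, -⟩ := hex c₂ h2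
  -- translation trick: φ((z+k)−k) = φ z ≠ 0
  have htr : ∀ k : Fin d → ℤ, φ (fun i => (z i + k i) - k i) ≠ 0 := by
    intro k
    have : (fun i => (z i + (k i : ℝ)) - k i) = z := funext fun i => by ring
    rw [this]; exact hz
  -- c = c₁ + c₂ coefficientwise
  have hc : ∀ k, c k = c₁ k + c₂ k := by
    intro k
    have h0 : ∀ x ∈ (Set.univ : Set (Fin d → ℝ)),
        sig d φ (fun j => c j - c₁ j - c₂ j) x = 0 := by
      intro x _
      obtain ⟨F, hF⟩ := finF d φ hsupp x
      have hFx := hF x (by simp)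
      rw [sig_eq_sum d φ _ F x hFx]
      have e1 := sig_eq_sum d φ c F x hFx
      have e2 := sig_eq_sum d φ c₁ F x hFx
      have e3 := sig_eq_sum d φ c₂ F x hFx
      have := hadd x
      rw [e1, e2, e3] at this
      calc ∑ k ∈ F, (c k - c₁ k - c₂ k) * φ (fun i => x i - k i)
          = ∑ k ∈ F, (c k * φ (fun i => x i - k i) - c₁ k * φ (fun i => x i - k i)
              - c₂ k * φ (fun i => x i - k i)) := by
            apply Finset.sum_congr rfl; intro k _; ring
        _ = ∑ k ∈ F, c k * φ (fun i => x i - k i)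
              - ∑ k ∈ F, c₁ k * φ (fun i => x i - k i)
              - ∑ k ∈ F, c₂ k * φ (fun i => x i - k i) := by
            rw [Finset.sum_sub_distrib, Finset.sum_sub_distrib]
        _ = 0 := by rw [this]; ring
    have hnall : ¬ ∀ x ∈ (Set.univ : Set (Fin d → ℝ)), φ (fun i => x i - k i) = 0 := by
      intro h
      exact htr k (h (fun i => z i + k i) (Set.mem_univ _))
    have h5 : c k - c₁ k - c₂ k = 0 :=
      hLLI Set.univ isOpen_univ (fun j => c j - c₁ j - c₂ j) h0 k hnall
    linarith
  -- no k has both c₁ k ≠ 0 and c₂ k ≠ 0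
  have hdisj : ∀ k, c₁ k ≠ 0 → c₂ k = 0 := by
    intro k hk
    by_contra h
    exact key d φ hcont hsupp hLLI c₁ c₂ hmul k k hk h (fun i => z i + k i)
      (mul_ne_zero (htr k) (htr k))
  -- edges preserve the side
  have hstep : ∀ a b, GraphAdj d φ c a b → c₁ a ≠ 0 → c₁ b ≠ 0 := by
    rintro a b ⟨-, -, hcb, x, hov⟩ ha
    intro hb
    have hc2b : c₂ b ≠ 0 := by
      intro h
      exact hcb (by rw [hc b, hb, h, add_zero])
    exact key d φ hcont hsupp hLLI c₁ c₂ hmul a b ha hc2b x hov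
  have hpath : ∀ {a b : Fin d → ℤ}, Relation.ReflTransGen (GraphAdj d φ c) a b →
      c₁ a ≠ 0 → c₁ b ≠ 0 := by
    intro a b h
    induction h with
    | refl => exact id
    | tail _ step ih => exact fun ha => hstep _ _ step (ih ha)
  -- k₁ and k₂ are both nonzero coefficients of c
  have hck₁ : c k₁ ≠ 0 := by rw [hc k₁, hdisj k₁ hk₁, add_zero]; exact hk₁
  have hc1k₂ : c₁ k₂ = 0 := by
    by_contra h
    exact hk₂ (hdisj k₂ h)
  have hck₂ : c k₂ ≠ 0 := by rw [hc k₂, hc1k₂, zero_add]; exact hk₂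
  exact hpath (hconn k₁ k₂ hck₁ hck₂) hk₁ hc1k₂
end

section
/- Let h(t) = max(1−|t|, 0) and φ₀(t) = h(4t−1) + h(4t−3) + h(4t−5) − h(4t−7). Define f₁(t) = Σ_{k∈ℤ} φ₀(t−k) and f₂(t) = Σ_{k∈ℤ} (−1)^k φ₀(t−k). Then f₁ and f₂ are nonzero, f₁ is supported in [0, 1/2] + ℤ, f₂ is supported in [1/2, 1] + ℤ, and f₁(t)·f₂(t) = 0 for all t ∈ ℝ. -/
/-- The hat function `h(t) = max(1 − |t|, 0)`, supported on `[−1, 1]`. -/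
noncomputable def hatFn (t : ℝ) : ℝ := max (1 - |t|) 0

/-- `φ₀(t) = h(4t−1) + h(4t−3) + h(4t−5) − h(4t−7)`. -/
noncomputable def φ₀ (t : ℝ) : ℝ :=
  hatFn (4 * t - 1) + hatFn (4 * t - 3) + hatFn (4 * t - 5) - hatFn (4 * t - 7)

/-- `f₁(t) = Σ_{k∈ℤ} φ₀(t − k)`. -/
noncomputable def f₁ (t : ℝ) : ℝ := ∑' k : ℤ, φ₀ (t - (k : ℝ))

/-- `f₂(t) = Σ_{k∈ℤ} (−1)^k φ₀(t − k)`. -/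
noncomputable def f₂ (t : ℝ) : ℝ := ∑' k : ℤ, (-1 : ℝ) ^ k * φ₀ (t - (k : ℝ))

lemma hat_zero {x : ℝ} (h : 1 ≤ |x|) : hatFn x = 0 :=
  max_eq_right (by linarith)

lemma hat_lt {x : ℝ} (h : hatFn x ≠ 0) : |x| < 1 := by
  by_contra hc
  push_neg at hc
  exact h (hat_zero hc)

lemma phi0_zero {t : ℝ} (h : t ≤ 0 ∨ 2 ≤ t) : φ₀ t = 0 := by
  unfold φ₀
  rcases h with h | h
  · rw [hat_zero (le_abs.mpr (Or.inr (by linarith))),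
      hat_zero (le_abs.mpr (Or.inr (by linarith))),
      hat_zero (le_abs.mpr (Or.inr (by linarith))),
      hat_zero (le_abs.mpr (Or.inr (by linarith)))]
    ring
  · rw [hat_zero (le_abs.mpr (Or.inl (by linarith))),
      hat_zero (le_abs.mpr (Or.inl (by linarith))),
      hat_zero (le_abs.mpr (Or.inl (by linarith))),
      hat_zero (le_abs.mpr (Or.inl (by linarith)))]
    ring

lemma tsum_phi (c : ℤ → ℝ) (t : ℝ) :
    ∑' k : ℤ, c k * φ₀ (t - (k : ℝ)) =
      c (⌊t⌋ - 1) * φ₀ ((t - ⌊t⌋) + 1) + c ⌊t⌋ * φ₀ (t - ⌊t⌋) := by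
  have hfl : (⌊t⌋ : ℝ) ≤ t := Int.floor_le t
  have hfu : t < ⌊t⌋ + 1 := Int.lt_floor_add_one t
  have hs : ∀ k : ℤ, k ∉ ({⌊t⌋ - 1, ⌊t⌋} : Finset ℤ) → c k * φ₀ (t - (k : ℝ)) = 0 := by
    intro k hk
    simp only [Finset.mem_insert, Finset.mem_singleton] at hk
    push_neg at hk
    have : k ≤ ⌊t⌋ - 2 ∨ ⌊t⌋ + 1 ≤ k := by omega
    rcases this with h | h
    · have : (k : ℝ) ≤ (⌊t⌋ : ℝ) - 2 := by exact_mod_cast h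
      rw [phi0_zero (Or.inr (by linarith))]; ring
    · have : (⌊t⌋ : ℝ) + 1 ≤ (k : ℝ) := by exact_mod_cast h
      rw [phi0_zero (Or.inl (by linarith))]; ring
  rw [tsum_eq_sum hs, Finset.sum_pair (by omega : (⌊t⌋ - 1 : ℤ) ≠ ⌊t⌋)]
  push_cast
  ring_nf

lemma g1 {s : ℝ} (h0 : 0 ≤ s) (h1 : s < 1) :
    φ₀ (s + 1) + φ₀ s = 2 * hatFn (4 * s - 1) := by
  unfold φ₀
  have e1 : hatFn (4 * (s + 1) - 1) = 0 := hat_zero (le_abs.mpr (Or.inl (by linarith)))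
  have e2 : hatFn (4 * (s + 1) - 3) = 0 := hat_zero (le_abs.mpr (Or.inl (by linarith)))
  have e3 : hatFn (4 * (s + 1) - 5) = hatFn (4 * s - 1) := by congr 1; ring
  have e4 : hatFn (4 * (s + 1) - 7) = hatFn (4 * s - 3) := by congr 1; ring
  have e5 : hatFn (4 * s - 5) = 0 := hat_zero (le_abs.mpr (Or.inr (by linarith)))
  have e6 : hatFn (4 * s - 7) = 0 := hat_zero (le_abs.mpr (Or.inr (by linarith)))
  rw [e1, e2, e3, e4, e5, e6]; ring

lemma g2 {s : ℝ} (h0 : 0 ≤ s) (h1 : s < 1) :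
    φ₀ s - φ₀ (s + 1) = 2 * hatFn (4 * s - 3) := by
  unfold φ₀
  have e1 : hatFn (4 * (s + 1) - 1) = 0 := hat_zero (le_abs.mpr (Or.inl (by linarith)))
  have e2 : hatFn (4 * (s + 1) - 3) = 0 := hat_zero (le_abs.mpr (Or.inl (by linarith)))
  have e3 : hatFn (4 * (s + 1) - 5) = hatFn (4 * s - 1) := by congr 1; ring
  have e4 : hatFn (4 * (s + 1) - 7) = hatFn (4 * s - 3) := by congr 1; ring
  have e5 : hatFn (4 * s - 5) = 0 := hat_zero (le_abs.mpr (Or.inr (by linarith)))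
  have e6 : hatFn (4 * s - 7) = 0 := hat_zero (le_abs.mpr (Or.inr (by linarith)))
  rw [e1, e2, e3, e4, e5, e6]; ring

lemma f1_eq (t : ℝ) : f₁ t = 2 * hatFn (4 * (t - ⌊t⌋) - 1) := by
  have h0 : (0 : ℝ) ≤ t - ⌊t⌋ := by linarith [Int.floor_le t]
  have h1 : t - ⌊t⌋ < 1 := by linarith [Int.lt_floor_add_one t]
  have := tsum_phi (fun _ => 1) t
  simp only [one_mul] at this
  rw [f₁, this, g1 h0 h1]

lemma zpow_negone_sub (n : ℤ) : (-1 : ℝ) ^ (n - 1) = -(-1 : ℝ) ^ n := by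
  rw [zpow_sub₀ (by norm_num : (-1 : ℝ) ≠ 0), zpow_one, div_neg, div_one]

lemma f2_eq (t : ℝ) : f₂ t = (-1 : ℝ) ^ ⌊t⌋ * (2 * hatFn (4 * (t - ⌊t⌋) - 3)) := by
  have h0 : (0 : ℝ) ≤ t - ⌊t⌋ := by linarith [Int.floor_le t]
  have h1 : t - ⌊t⌋ < 1 := by linarith [Int.lt_floor_add_one t]
  have := tsum_phi (fun k => (-1 : ℝ) ^ k) t
  rw [f₂, this, zpow_negone_sub, ← g2 h0 h1]
  ring

lemma hatFn_zero_eval : hatFn 0 = 1 := by simp [hatFn]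

/-- `f₁` and `f₂` are nonzero, `f₁` is supported in `[0, 1/2] + ℤ`,
`f₂` is supported in `[1/2, 1] + ℤ`, and `f₁ · f₂ ≡ 0` on `ℝ`. -/
theorem stmt6 :
    f₁ ≠ 0 ∧ f₂ ≠ 0 ∧
    (∀ t : ℝ, f₁ t ≠ 0 → ∃ k : ℤ, t - (k : ℝ) ∈ Set.Icc (0 : ℝ) (1 / 2)) ∧
    (∀ t : ℝ, f₂ t ≠ 0 → ∃ k : ℤ, t - (k : ℝ) ∈ Set.Icc (1 / 2 : ℝ) 1) ∧
    (∀ t : ℝ, f₁ t * f₂ t = 0) := by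
  refine ⟨?_, ?_, ?_, ?_, ?_⟩
  · intro h
    have h1 : f₁ (1/4 : ℝ) = 0 := by rw [h]; rfl
    rw [f1_eq] at h1
    norm_num [hatFn_zero_eval] at h1
  · intro h
    have h1 : f₂ (3/4 : ℝ) = 0 := by rw [h]; rfl
    rw [f2_eq] at h1
    norm_num [hatFn_zero_eval] at h1
  · intro t ht
    rw [f1_eq] at ht
    have : hatFn (4 * (t - ⌊t⌋) - 1) ≠ 0 := fun h => ht (by rw [h]; ring)
    have h2 := hat_lt this
    rw [abs_lt] at h2
    exact ⟨⌊t⌋, by constructor <;> [linarith [h2.1]; linarith [h2.2]]⟩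
  · intro t ht
    rw [f2_eq] at ht
    have : hatFn (4 * (t - ⌊t⌋) - 3) ≠ 0 := fun h => ht (by rw [h]; ring)
    have h2 := hat_lt this
    rw [abs_lt] at h2
    exact ⟨⌊t⌋, by constructor <;> [linarith [h2.1]; linarith [h2.2]]⟩
  · intro t
    rw [f1_eq, f2_eq]
    rcases eq_or_ne (hatFn (4 * (t - ⌊t⌋) - 1)) 0 with h | h
    · rw [h]; ring
    · have h1 := hat_lt h
      rw [abs_lt] at h1
      have : hatFn (4 * (t - ⌊t⌋) - 3) = 0 :=
        hat_zero (le_abs.mpr (Or.inr (by linarith [h1.2])))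
      rw [this]; ring
end

section
/- With φ₀, f₁, f₂ as in the previous context, the two signals f₁ + 2f₂ and f₁ − 2f₂ have the same magnitude on ℝ, i.e., |f₁(t)+2f₂(t)| = |f₁(t)−2f₂(t)| for all t ∈ ℝ, but f₁ + 2f₂ is not equal to f₁ − 2f₂ and not equal to −(f₁ − 2f₂); hence f₁ + 2f₂ is not determined up to a sign by its magnitude measurements on ℝ. -/
lemma hat_zero_of {x : ℝ} (hx : 1 ≤ |x|) : hatFn x = 0 := by
  simp [hatFn, max_eq_right]; linarith

lemma hat_zero_le {x : ℝ} (hx : x ≤ -1) : hatFn x = 0 :=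
  hat_zero_of (by rw [abs_of_nonpos (by linarith)]; linarith)

lemma hat_zero_ge {x : ℝ} (hx : 1 ≤ x) : hatFn x = 0 :=
  hat_zero_of (le_trans hx (le_abs_self x))

lemma phi_zero_left {s : ℝ} (h : s ≤ 0) : φ₀ s = 0 := by
  unfold φ₀
  rw [hat_zero_le (by linarith), hat_zero_le (by linarith),
    hat_zero_le (by linarith), hat_zero_le (by linarith)]
  ring

lemma phi_zero_right {s : ℝ} (h : 2 ≤ s) : φ₀ s = 0 := by
  unfold φ₀
  rw [hat_zero_ge (by linarith), hat_zero_ge (by linarith),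
    hat_zero_ge (by linarith), hat_zero_ge (by linarith)]
  ring

lemma phi_lo {s : ℝ} (h0 : 0 ≤ s) (h1 : s < 1) :
    φ₀ s = hatFn (4 * s - 1) + hatFn (4 * s - 3) := by
  unfold φ₀
  rw [hat_zero_le (x := 4 * s - 5) (by linarith), hat_zero_le (x := 4 * s - 7) (by linarith)]
  ring

lemma phi_hi {s : ℝ} (h0 : 0 ≤ s) (h1 : s < 1) :
    φ₀ (s + 1) = hatFn (4 * s - 1) - hatFn (4 * s - 3) := by
  unfold φ₀
  have e1 : 4 * (s + 1) - 1 = 4 * s + 3 := by ring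
  have e2 : 4 * (s + 1) - 3 = 4 * s + 1 := by ring
  have e3 : 4 * (s + 1) - 5 = 4 * s - 1 := by ring
  have e4 : 4 * (s + 1) - 7 = 4 * s - 3 := by ring
  rw [e1, e2, e3, e4, hat_zero_ge (x := 4 * s + 3) (by linarith),
    hat_zero_ge (x := 4 * s + 1) (by linarith)]
  ring

lemma hat_mul {s : ℝ} : hatFn (4 * s - 1) * hatFn (4 * s - 3) = 0 := by
  rcases le_or_gt s (1/2) with h | h
  · rw [hat_zero_le (x := 4 * s - 3) (by linarith), mul_zero]
  · rw [hat_zero_ge (x := 4 * s - 1) (by linarith), zero_mul]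

lemma off_support (t : ℝ) {k : ℤ} (hk : k ∉ ({⌊t⌋ - 1, ⌊t⌋} : Finset ℤ)) :
    φ₀ (t - (k : ℝ)) = 0 := by
  simp only [Finset.mem_insert, Finset.mem_singleton] at hk
  push_neg at hk
  have hf := Int.floor_le t
  have hf' := Int.lt_floor_add_one t
  rcases (by omega : k ≤ ⌊t⌋ - 2 ∨ ⌊t⌋ + 1 ≤ k) with h | h
  · apply phi_zero_right
    have : (k : ℝ) ≤ (⌊t⌋ : ℝ) - 2 := by exact_mod_cast by push_cast; linarith
    linarith
  · apply phi_zero_left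
    have : (⌊t⌋ : ℝ) + 1 ≤ (k : ℝ) := by exact_mod_cast by push_cast; linarith
    linarith

lemma f₁_eq (t : ℝ) : f₁ t = φ₀ (t - ⌊t⌋ + 1) + φ₀ (t - ⌊t⌋) := by
  rw [f₁, tsum_eq_sum (s := ({⌊t⌋ - 1, ⌊t⌋} : Finset ℤ)) (fun k hk => off_support t hk)]
  rw [Finset.sum_pair (by omega)]
  push_cast
  ring_nf

lemma f₂_eq (t : ℝ) :
    f₂ t = (-1 : ℝ) ^ ⌊t⌋ * (φ₀ (t - ⌊t⌋) - φ₀ (t - ⌊t⌋ + 1)) := by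
  rw [f₂, tsum_eq_sum (s := ({⌊t⌋ - 1, ⌊t⌋} : Finset ℤ))
    (fun k hk => by rw [off_support t hk, mul_zero])]
  rw [Finset.sum_pair (by omega)]
  have hpow : (-1 : ℝ) ^ (⌊t⌋ - 1) = -(-1 : ℝ) ^ ⌊t⌋ := by
    rw [zpow_sub₀ (by norm_num), zpow_one]; ring
  rw [hpow]
  push_cast
  ring_nf

lemma fmul (t : ℝ) : f₁ t * f₂ t = 0 := by
  have hs0 : 0 ≤ t - ⌊t⌋ := by have := Int.floor_le t; linarith
  have hs1 : t - ⌊t⌋ < 1 := by have := Int.lt_floor_add_one t; linarith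
  rw [f₁_eq, f₂_eq, phi_lo hs0 hs1, phi_hi hs0 hs1]
  set c : ℝ := (-1 : ℝ) ^ ⌊t⌋ with hc
  have hab := hat_mul (s := t - ⌊t⌋)
  linear_combination (4 * c) * hab

lemma f₂_val : f₂ (3/4 : ℝ) = 2 := by
  have hf : ⌊(3/4 : ℝ)⌋ = 0 := by norm_num [Int.floor_eq_zero_iff]
  rw [f₂_eq, hf]
  norm_num [φ₀, hatFn, abs_of_nonneg, abs_of_nonpos]

lemma f₁_val : f₁ (1/4 : ℝ) = 2 := by
  have hf : ⌊(1/4 : ℝ)⌋ = 0 := by norm_num [Int.floor_eq_zero_iff]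
  rw [f₁_eq, hf]
  norm_num [φ₀, hatFn, abs_of_nonneg, abs_of_nonpos]

/-- `f₁ + 2f₂` and `f₁ − 2f₂` have the same magnitude everywhere on
`ℝ`, yet `f₁ + 2f₂` is neither `f₁ − 2f₂` nor `−(f₁ − 2f₂)`; hence `f₁ + 2f₂` is
not determined up to a sign by its magnitude measurements on `ℝ`. -/
theorem stmt7 :
    (∀ t : ℝ, |f₁ t + 2 * f₂ t| = |f₁ t - 2 * f₂ t|) ∧
    (fun t => f₁ t + 2 * f₂ t) ≠ (fun t => f₁ t - 2 * f₂ t) ∧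
    (fun t => f₁ t + 2 * f₂ t) ≠ (fun t => -(f₁ t - 2 * f₂ t)) := by
  refine ⟨fun t => ?_, fun h => ?_, fun h => ?_⟩
  · rcases mul_eq_zero.mp (fmul t) with h | h
    · rw [h, zero_add, zero_sub, abs_neg]
    · rw [h]; ring_nf
  · have := congrFun h (3/4 : ℝ)
    rw [f₂_val] at this
    linarith
  · have := congrFun h (1/4 : ℝ)
    rw [f₁_val] at this
    linarith
end

section
/- Let V be a finite-dimensional real vector space of continuous functions on a set A, with basis g₁, …, g_N. Then there exists a finite set Γ ⊂ A with #Γ ≤ N(N+1)/2 and functions d_γ : A → ℝ (γ ∈ Γ) such that for every f ∈ V and every x ∈ A, |f(x)|² = Σ_{γ∈Γ} d_γ(x) |f(γ)|². -/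
/-- if `V` is an `N`-dimensional real vector space of continuous
functions on a set `A ⊆ ℝ^d`, with basis `g₁, …, g_N`, then there is a finite set
`Γ ⊆ A` with `#Γ ≤ N(N+1)/2` and functions `d_γ : A → ℝ` such that
`|f(x)|² = Σ_{γ∈Γ} d_γ(x) |f(γ)|²` for every `f ∈ V` and every `x ∈ A`. -/
theorem stmt8 (d N : ℕ) (A : Set (Fin d → ℝ))
    (V : Submodule ℝ ((Fin d → ℝ) → ℝ))
    (hcont : ∀ f ∈ V, ContinuousOn f A)
    (g : Module.Basis (Fin N) ℝ V) :
    ∃ Γ : Finset (Fin d → ℝ), ↑Γ ⊆ A ∧ Γ.card ≤ N * (N + 1) / 2 ∧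
      ∃ dco : (Fin d → ℝ) → (Fin d → ℝ) → ℝ,
        ∀ f ∈ V, ∀ x ∈ A, |f x| ^ 2 = ∑ γ ∈ Γ, dco x γ * |f γ| ^ 2 := by
  classical
  set Φ : (Fin d → ℝ) → (Sym2 (Fin N) → ℝ) := fun x s =>
    Sym2.lift ⟨fun i j => (g i : (Fin d → ℝ) → ℝ) x * (g j : (Fin d → ℝ) → ℝ) x,
      fun i j => mul_comm _ _⟩ s with hΦdef
  obtain ⟨t, hts, htspan, htind⟩ := exists_linearIndependent ℝ (Φ '' A)
  have htfin : t.Finite := htind.setFinite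
  haveI := htfin.fintype
  have hcard : htfin.toFinset.card ≤ N * (N + 1) / 2 := by
    have h1 : Fintype.card t ≤ Module.finrank ℝ (Sym2 (Fin N) → ℝ) :=
      htind.fintype_card_le_finrank
    have h2 : Module.finrank ℝ (Sym2 (Fin N) → ℝ) = N * (N + 1) / 2 := by
      rw [Module.finrank_pi, Sym2.card, Fintype.card_fin, Nat.choose_two_right,
        Nat.add_sub_cancel, Nat.mul_comm]
    rw [Set.Finite.card_toFinset]
    omega
  -- choose preimages of the vectors in t
  have hsig : ∀ v : Sym2 (Fin N) → ℝ, ∃ a : Fin d → ℝ, v ∈ t → a ∈ A ∧ Φ a = v := by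
    intro v
    by_cases hv : v ∈ t
    · obtain ⟨a, ha, hav⟩ := hts hv
      exact ⟨a, fun _ => ⟨ha, hav⟩⟩
    · exact ⟨fun _ => 0, fun h => absurd h hv⟩
  choose σ hσ using hsig
  refine ⟨htfin.toFinset.image σ, ?_, le_trans (Finset.card_image_le) hcard, ?_⟩
  · intro γ hγ
    simp only [Finset.coe_image, Set.mem_image, Finset.mem_coe,
      Set.Finite.mem_toFinset] at hγ
    obtain ⟨v, hv, rfl⟩ := hγ
    exact (hσ v hv).1
  set Γ : Finset (Fin d → ℝ) := htfin.toFinset.image σ with hΓdef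
  have hΦΓ : ∀ γ ∈ Γ, Φ γ ∈ t := by
    intro γ hγ
    simp only [hΓdef, Finset.mem_image, Set.Finite.mem_toFinset] at hγ
    obtain ⟨v, hv, rfl⟩ := hγ
    rw [(hσ v hv).2]; exact hv
  have hinj : Set.InjOn Φ ↑Γ := by
    intro γ₁ h₁ γ₂ h₂ h
    simp only [hΓdef, Finset.coe_image, Set.mem_image, Finset.mem_coe,
      Set.Finite.mem_toFinset] at h₁ h₂
    obtain ⟨v₁, hv₁, rfl⟩ := h₁
    obtain ⟨v₂, hv₂, rfl⟩ := h₂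
    rw [(hσ v₁ hv₁).2, (hσ v₂ hv₂).2] at h
    rw [h]
  have himage : ↑(Γ.image Φ) = t := by
    ext v
    simp only [Finset.coe_image, Set.mem_image, Finset.mem_coe]
    constructor
    · rintro ⟨γ, hγ, rfl⟩
      exact hΦΓ γ hγ
    · intro hv
      refine ⟨σ v, ?_, (hσ v hv).2⟩
      simp only [hΓdef, Finset.mem_image, Set.Finite.mem_toFinset]
      exact ⟨v, hv, rfl⟩
  -- coefficients
  have key : ∀ x, ∃ c : (Sym2 (Fin N) → ℝ) → ℝ, x ∈ A →
      Φ x = ∑ γ ∈ Γ, c (Φ γ) • Φ γ := by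
    intro x
    by_cases hx : x ∈ A
    · have hmem : Φ x ∈ Submodule.span ℝ (↑(Γ.image Φ)) := by
        rw [himage, htspan]
        exact Submodule.subset_span (Set.mem_image_of_mem _ hx)
      obtain ⟨c, -, hc⟩ := Submodule.mem_span_finset.1 hmem
      refine ⟨c, fun _ => ?_⟩
      rw [← hc, Finset.sum_image fun a ha b hb h => hinj ha hb h]
    · exact ⟨0, fun h => absurd h hx⟩
  choose co hco using key
  refine ⟨fun x γ => co x (Φ γ), ?_⟩
  intro f hf x hx
  set c : Fin N → ℝ := fun i => g.repr ⟨f, hf⟩ i with hcdef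
  have hrepr : ∀ y, f y = ∑ i : Fin N, c i * (g i : (Fin d → ℝ) → ℝ) y := by
    intro y
    have h := g.sum_repr ⟨f, hf⟩
    have h2 := congrArg (fun u : V => (u : (Fin d → ℝ) → ℝ) y) h
    simp only [AddSubmonoidClass.coe_finset_sum, SetLike.val_smul, Finset.sum_apply,
      Pi.smul_apply, smul_eq_mul] at h2
    exact h2.symm
  have hsq : ∀ y, f y ^ 2 = ∑ p : Fin N × Fin N, (c p.1 * c p.2) * Φ y (Sym2.mk p.1 p.2) := by
    intro y
    rw [hrepr y, sq, Finset.sum_mul_sum, ← Finset.univ_product_univ, Finset.sum_product]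
    refine Finset.sum_congr rfl fun i _ => Finset.sum_congr rfl fun j _ => ?_
    simp only [hΦdef, Sym2.lift_mk]
    ring
  calc |f x| ^ 2 = f x ^ 2 := sq_abs _
    _ = ∑ p : Fin N × Fin N, (c p.1 * c p.2) * Φ x (Sym2.mk p.1 p.2) := hsq x
    _ = ∑ p : Fin N × Fin N, (c p.1 * c p.2) *
          ∑ γ ∈ Γ, co x (Φ γ) * Φ γ (Sym2.mk p.1 p.2) := by
        refine Finset.sum_congr rfl fun p _ => ?_
        have h := congrFun (hco x hx) (Sym2.mk p.1 p.2)
        simp only [Finset.sum_apply, Pi.smul_apply, smul_eq_mul] at h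
        rw [h]
    _ = ∑ γ ∈ Γ, co x (Φ γ) * ∑ p : Fin N × Fin N, (c p.1 * c p.2) * Φ γ (Sym2.mk p.1 p.2) := by
        simp only [Finset.mul_sum]
        rw [Finset.sum_comm]
        exact Finset.sum_congr rfl fun γ _ => Finset.sum_congr rfl fun p _ => by ring
    _ = ∑ γ ∈ Γ, co x (Φ γ) * |f γ| ^ 2 := by
        refine Finset.sum_congr rfl fun γ _ => ?_
        rw [← hsq γ, sq_abs]
end

section
/- Let V be a locally finite-dimensional shift-invariant space of real-valued functions on ℝ^d (i.e., V is invariant under integer shifts and its restriction to any bounded open set is finite-dimensional). Then there exists a finite set Γ ⊂ (0,1)^d such that every nonseparable signal f ∈ V is determined, up to a sign, by its samples |f(y)|, y ∈ Γ + ℤ^d: if f, g ∈ V are nonseparable and |g(y)| = |f(y)| for all y ∈ Γ + ℤ^d, and if nonseparable signals are determined up to sign by magnitudes on all of ℝ^d, then g = f or g = −f. -/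
/-- `f` is a nonseparable signal of the space `V`: `f ∈ V` and `f` is not the sum of
two nonzero members of `V` whose pointwise product vanishes identically. -/
def NonsepV (d : ℕ) (V : Submodule ℝ ((Fin d → ℝ) → ℝ)) (f : (Fin d → ℝ) → ℝ) : Prop :=
  f ∈ V ∧ ¬ ∃ f₁ ∈ V, ∃ f₂ ∈ V,
    f₁ ≠ 0 ∧ f₂ ≠ 0 ∧ f = f₁ + f₂ ∧ ∀ x, f₁ x * f₂ x = 0

lemma sel {ι : Type*} [Fintype ι] {X : Type*} (Φ : X → ι → ℝ) (S : Set X) :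
    ∃ T : Finset X, ↑T ⊆ S ∧ ∀ c : ι → ℝ, (∀ γ ∈ T, ∑ i, c i * Φ γ i = 0) →
      ∀ x ∈ S, ∑ i, c i * Φ x i = 0 := by
  obtain ⟨b, hbs, hspan, hli⟩ := exists_linearIndependent ℝ (Φ '' S)
  have hbfin : b.Finite := hli.set_finite_of_isNoetherian
  have hpre : ∀ v ∈ b, ∃ x ∈ S, Φ x = v := fun v hv => hbs hv
  choose ch hchS hchΦ using hpre
  classical
  let T : Finset X := hbfin.toFinset.attach.image (fun v => ch v.1 (hbfin.mem_toFinset.mp v.2))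
  refine ⟨T, ?_, ?_⟩
  · intro x hx
    simp only [T, Finset.coe_image, Set.mem_image] at hx
    obtain ⟨v, _, rfl⟩ := hx
    exact hchS _ _
  · intro c hc x hxS
    set L : (ι → ℝ) →ₗ[ℝ] ℝ := ∑ i, c i • LinearMap.proj i with hL
    have happ : ∀ v : ι → ℝ, L v = ∑ i, c i * v i := by
      intro v; simp [hL, LinearMap.sum_apply, smul_eq_mul]
    have hker : b ⊆ (LinearMap.ker L : Set (ι → ℝ)) := by
      intro v hv
      have := hc (ch v hv) (by
        simp only [T, Finset.mem_image]
        exact ⟨⟨v, hbfin.mem_toFinset.mpr hv⟩, Finset.mem_attach _ _, rfl⟩)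
      rw [hchΦ v hv] at this
      rw [SetLike.mem_coe, LinearMap.mem_ker, happ]
      exact this
    have hx : Φ x ∈ Submodule.span ℝ b := by
      rw [hspan]; exact Submodule.subset_span ⟨x, hxS, rfl⟩
    have := (Submodule.span_le.mpr hker) hx
    rw [LinearMap.mem_ker, happ] at this
    exact this


/-- a locally finite-dimensional shift-invariant space `V` of continuous
signals on `ℝ^d` admits a finite set `Γ ⊆ (0,1)^d` such that any nonseparable signal
is determined, up to a sign, from its phaseless samples on `Γ + ℤ^d`, assuming
nonseparable signals are determined up to a sign by their magnitudes on all of `ℝ^d`. -/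
theorem stmt9 (d : ℕ) (V : Submodule ℝ ((Fin d → ℝ) → ℝ))
    (hcont : ∀ f ∈ V, Continuous f)
    (hshift : ∀ f ∈ V, ∀ k : Fin d → ℤ, (fun x => f (fun i => x i - (k i : ℝ))) ∈ V)
    (hlocfd : ∀ A : Set (Fin d → ℝ), IsOpen A → Bornology.IsBounded A →
      ∃ (n : ℕ) (g : Fin n → ((Fin d → ℝ) → ℝ)),
        ∀ f ∈ V, ∃ a : Fin n → ℝ, ∀ x ∈ A, f x = ∑ i, a i * g i x)
    (hdet : ∀ f ∈ V, ∀ g ∈ V, NonsepV d V f →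
      (∀ x, |g x| = |f x|) → g = f ∨ g = -f) :
    ∃ Γ : Finset (Fin d → ℝ), (∀ γ ∈ Γ, ∀ i, γ i ∈ Set.Ioo (0 : ℝ) 1) ∧
      ∀ f ∈ V, ∀ g ∈ V, NonsepV d V f → NonsepV d V g →
        (∀ γ ∈ Γ, ∀ k : Fin d → ℤ,
          |g (fun i => γ i + (k i : ℝ))| = |f (fun i => γ i + (k i : ℝ))|) →
        g = f ∨ g = -f := by
  set S : Set (Fin d → ℝ) := Set.pi Set.univ (fun _ => Set.Ioo (0:ℝ) 1) with hS
  have hSopen : IsOpen S := isOpen_set_pi Set.finite_univ (fun i _ => isOpen_Ioo)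
  have hSbdd : Bornology.IsBounded S := by
    apply (Metric.isBounded_closedBall (x := (0 : Fin d → ℝ)) (r := 1)).subset
    intro x hx
    rw [Metric.mem_closedBall, dist_zero_right]
    rw [pi_norm_le_iff_of_nonneg zero_le_one]
    intro i
    have := hx i (Set.mem_univ i)
    rw [Real.norm_eq_abs, abs_le]
    constructor <;> [linarith [this.1]; linarith [this.2]]
  obtain ⟨n, g, hg⟩ := hlocfd S hSopen hSbdd
  obtain ⟨T, hTS, hT⟩ := sel (fun x (ij : Fin n × Fin n) => g ij.1 x * g ij.2 x) S
  refine ⟨T, fun γ hγ i => hTS hγ i (Set.mem_univ i), ?_⟩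
  intro f hf q hq hfns hqns hsamp
  apply hdet f hf q hq hfns
  -- key: pointwise square equality
  have key : ∀ x, q x ^ 2 = f x ^ 2 := by
    intro x
    set k : Fin d → ℤ := fun i => ⌊x i⌋ with hk
    set F : (Fin d → ℝ) → ℝ := fun y => f (fun i => y i + (k i : ℝ)) with hF
    set G : (Fin d → ℝ) → ℝ := fun y => q (fun i => y i + (k i : ℝ)) with hG
    have hFV : F ∈ V := by
      have := hshift f hf (fun i => -k i)
      simpa [sub_neg_eq_add] using this
    have hGV : G ∈ V := by
      have := hshift q hq (fun i => -k i)
      simpa [sub_neg_eq_add] using this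
    obtain ⟨a, ha⟩ := hg F hFV
    obtain ⟨b, hb⟩ := hg G hGV
    set c : Fin n × Fin n → ℝ :=
      fun ij => a ij.1 * a ij.2 - b ij.1 * b ij.2 with hc
    have hsum : ∀ y ∈ S, ∑ ij : Fin n × Fin n, c ij * (g ij.1 y * g ij.2 y)
        = F y ^ 2 - G y ^ 2 := by
      intro y hy
      rw [ha y hy, hb y hy]
      rw [Fintype.sum_prod_type]
      rw [sq, sq, Finset.sum_mul_sum, Finset.sum_mul_sum]
      rw [← Finset.sum_sub_distrib]
      apply Finset.sum_congr rfl
      intro i _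
      rw [← Finset.sum_sub_distrib]
      apply Finset.sum_congr rfl
      intro j _
      ring
    have hzero : ∀ y ∈ S, F y ^ 2 = G y ^ 2 := by
      intro y hy
      have h0 : ∀ γ ∈ T, ∑ ij : Fin n × Fin n,
          c ij * (g ij.1 γ * g ij.2 γ) = 0 := by
        intro γ hγ
        rw [hsum γ (hTS hγ)]
        have := hsamp γ hγ k
        have h2 : |G γ| = |F γ| := this
        rw [← sq_abs (F γ), ← sq_abs (G γ), h2]
        ring
      have := hT c h0 y hy
      rw [hsum y hy] at this
      linarith
    -- extend to closure of S by continuity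
    have hFc : Continuous F := hcont F hFV
    have hGc : Continuous G := hcont G hGV
    have heq : Set.EqOn (fun y => F y ^ 2) (fun y => G y ^ 2) (closure S) :=
      Set.EqOn.closure (fun y hy => hzero y hy) (hFc.pow 2) (hGc.pow 2)
    have hclo : closure S = Set.pi Set.univ (fun _ => Set.Icc (0:ℝ) 1) := by
      rw [hS, closure_pi_set]
      simp only [closure_Ioo (zero_ne_one' ℝ)]
    set y : Fin d → ℝ := fun i => Int.fract (x i) with hy
    have hymem : y ∈ closure S := by
      rw [hclo]
      intro i _
      exact ⟨Int.fract_nonneg (x i), (Int.fract_lt_one (x i)).le⟩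
    have hyx : (fun i => y i + (k i : ℝ)) = x := by
      funext i
      simp only [hy, hk]
      exact Int.fract_add_floor (x i)
    have hFy : F y = f x := by simp only [hF, hyx]
    have hGy : G y = q x := by simp only [hG, hyx]
    have := heq hymem
    simp only [hFy, hGy] at this
    exact this.symm
  intro x
  exact (sq_eq_sq_iff_abs_eq_abs (q x) (f x)).mp (key x)
end

section
/- Let A be a bounded open set and V a locally finite-dimensional space of real-valued continuous signals on ℝ^d. Then there exists a finite set Γ ⊂ A and functions d_γ : A → ℝ such that |f(x)|² = Σ_{γ∈Γ} d_γ(x)|f(γ)|² holds for all f ∈ V and all x ∈ A. -/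
/-- if `A ⊆ ℝ^d` is a bounded open set and `V` is a locally
finite-dimensional space of real-valued continuous signals on `ℝ^d`, then there is a
finite set `Γ ⊆ A` and functions `d_γ : A → ℝ` with
`|f(x)|² = Σ_{γ∈Γ} d_γ(x)|f(γ)|²` for all `f ∈ V` and all `x ∈ A`. -/
theorem stmt10 (d : ℕ) (A : Set (Fin d → ℝ))
    (hA : IsOpen A) (hAb : Bornology.IsBounded A)
    (V : Submodule ℝ ((Fin d → ℝ) → ℝ))
    (hcont : ∀ f ∈ V, Continuous f)
    (hlocfd : ∀ B : Set (Fin d → ℝ), IsOpen B → Bornology.IsBounded B →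
      ∃ (n : ℕ) (g : Fin n → ((Fin d → ℝ) → ℝ)),
        ∀ f ∈ V, ∃ a : Fin n → ℝ, ∀ x ∈ B, f x = ∑ i, a i * g i x) :
    ∃ Γ : Finset (Fin d → ℝ), ↑Γ ⊆ A ∧
      ∃ dco : (Fin d → ℝ) → (Fin d → ℝ) → ℝ,
        ∀ f ∈ V, ∀ x ∈ A, |f x| ^ 2 = ∑ γ ∈ Γ, dco x γ * |f γ| ^ 2 := by
  classical
  obtain ⟨n, g, hg⟩ := hlocfd A hA hAb
  set Φ : (Fin d → ℝ) → (Fin n → Fin n → ℝ) := fun x i j => g i x * g j x with hΦdef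
  obtain ⟨b, hbsub, hbspan, hbind⟩ := exists_linearIndependent ℝ (Φ '' A)
  have hbfin : b.Finite := hbind.setFinite
  have hpre : ∀ y ∈ b, ∃ x ∈ A, Φ x = y := fun y hy => hbsub hy
  choose! pre hpre1 hpre2 using hpre
  set Γ : Finset (Fin d → ℝ) := hbfin.toFinset.image pre with hΓdef
  have hΓA : ↑Γ ⊆ A := by
    intro x hx
    simp only [hΓdef, Finset.coe_image, Set.mem_image, Set.Finite.coe_toFinset] at hx
    obtain ⟨y, hy, rfl⟩ := hx
    exact hpre1 y hy
  have hspan : ∀ x ∈ A, Φ x ∈ Submodule.span ℝ (Φ '' (Γ : Set (Fin d → ℝ))) := by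
    intro x hx
    have h1 : b ⊆ Φ '' (Γ : Set (Fin d → ℝ)) := by
      intro y hy
      refine ⟨pre y, ?_, hpre2 y hy⟩
      simp only [hΓdef, Finset.coe_image, Set.Finite.coe_toFinset]
      exact ⟨y, hy, rfl⟩
    have h2 : Φ x ∈ Submodule.span ℝ b := by
      rw [hbspan]
      exact Submodule.subset_span ⟨x, hx, rfl⟩
    exact Submodule.span_mono h1 h2
  have hcoef : ∀ x ∈ A, ∃ c : (Fin d → ℝ) → ℝ,
      ∑ γ ∈ Γ, c γ • Φ γ = Φ x := by
    intro x hx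
    have h := hspan x hx
    rw [Set.image_eq_range] at h
    obtain ⟨c, hc⟩ := (Submodule.mem_span_range_iff_exists_fun ℝ).mp h
    refine ⟨fun γ => if h : γ ∈ Γ then c ⟨γ, h⟩ else 0, ?_⟩
    rw [← hc, ← Finset.sum_attach Γ (fun γ => (if h : γ ∈ Γ then c ⟨γ, h⟩ else 0) • Φ γ)]
    rw [show (Finset.univ : Finset ((Γ : Set (Fin d → ℝ)))) = Γ.attach from rfl]
    apply Finset.sum_congr rfl
    intro i _
    simp [i.2]
  choose! dco hdco using hcoef
  refine ⟨Γ, hΓA, dco, ?_⟩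
  intro f hf x hx
  obtain ⟨a, ha⟩ := hg f hf
  have key : ∀ y, y ∈ A → (f y) ^ 2 = ∑ i, ∑ j, (a i * a j) * Φ y i j := by
    intro y hy
    rw [ha y hy, sq, Finset.sum_mul_sum]
    apply Finset.sum_congr rfl; intro i _
    apply Finset.sum_congr rfl; intro j _
    simp only [hΦdef]; ring
  have hΦx : ∀ i j, Φ x i j = ∑ γ ∈ Γ, dco x γ * Φ γ i j := by
    intro i j
    rw [← hdco x hx]
    simp [Finset.sum_apply]
  calc |f x| ^ 2 = (f x) ^ 2 := sq_abs _
    _ = ∑ i, ∑ j, (a i * a j) * Φ x i j := key x hx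
    _ = ∑ i, ∑ j, ∑ γ ∈ Γ, dco x γ * ((a i * a j) * Φ γ i j) := by
        apply Finset.sum_congr rfl; intro i _
        apply Finset.sum_congr rfl; intro j _
        rw [hΦx i j, Finset.mul_sum]
        apply Finset.sum_congr rfl; intro γ _; ring
    _ = ∑ γ ∈ Γ, ∑ i, ∑ j, dco x γ * ((a i * a j) * Φ γ i j) := by
        rw [show (∑ i, ∑ j, ∑ γ ∈ Γ, dco x γ * ((a i * a j) * Φ γ i j))
            = ∑ i, ∑ γ ∈ Γ, ∑ j, dco x γ * ((a i * a j) * Φ γ i j) from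
          Finset.sum_congr rfl fun i _ => Finset.sum_comm]
        exact Finset.sum_comm
    _ = ∑ γ ∈ Γ, dco x γ * ∑ i, ∑ j, (a i * a j) * Φ γ i j := by
        apply Finset.sum_congr rfl; intro γ _
        rw [Finset.mul_sum]
        apply Finset.sum_congr rfl; intro i _
        rw [Finset.mul_sum]
    _ = ∑ γ ∈ Γ, dco x γ * |f γ| ^ 2 := by
        apply Finset.sum_congr rfl; intro γ hγ
        rw [sq_abs, key γ (hΓA hγ)]
end

section
/- Let A be a bounded open set, V a locally finite-dimensional space of continuous signals on ℝ^d, g₁,…,g_N a basis of V|_A, and Γ ⊂ A a finite set such that {G(γ) = (g_n(γ)g_{n'}(γ))_{n,n'} : γ ∈ Γ} spans the linear span of {G(x) : x ∈ A}. Then V has the local complement property on A if and only if for every subset Γ' ⊂ Γ, either the vectors (g_n(γ'))_{1≤n≤N}, γ' ∈ Γ', span ℝ^N or the vectors (g_n(γ))_{1≤n≤N}, γ ∈ Γ∖Γ', span ℝ^N. -/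
open Finset

/-- linear functional v ↦ ∑ a n * v n -/
noncomputable def phiA {N : ℕ} (a : Fin N → ℝ) : (Fin N → ℝ) →ₗ[ℝ] ℝ :=
  ∑ n, a n • LinearMap.proj n

lemma phiA_apply {N : ℕ} (a v : Fin N → ℝ) : phiA a v = ∑ n, a n * v n := by
  simp [phiA]

lemma phiA_single {N : ℕ} (a : Fin N → ℝ) (n : Fin N) :
    phiA a (Pi.single n 1) = a n := by
  rw [phiA_apply]
  simp [Pi.single_apply, mul_ite]

lemma dual_rep {N : ℕ} (φ : Module.Dual ℝ (Fin N → ℝ)) (v : Fin N → ℝ) :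
    φ v = ∑ n, φ (Pi.single n 1) * v n := by
  conv_lhs => rw [← Finset.univ_sum_single v]
  rw [map_sum]
  refine Finset.sum_congr rfl fun n _ => ?_
  have h : (Pi.single n (v n) : Fin N → ℝ) = v n • (Pi.single n 1 : Fin N → ℝ) := by
    ext m; by_cases hm : m = n <;> simp [hm, Pi.single_apply]
  rw [h, map_smul, smul_eq_mul, mul_comm]

lemma exists_ann {N : ℕ} (S : Set (Fin N → ℝ))
    (hS : Submodule.span ℝ S ≠ ⊤) :
    ∃ a : Fin N → ℝ, a ≠ 0 ∧ ∀ v ∈ S, ∑ n, a n * v n = 0 := by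
  obtain ⟨φ, hφ, hker⟩ :=
    Submodule.exists_dual_map_eq_bot_of_lt_top (p := Submodule.span ℝ S)
      hS.lt_top inferInstance
  refine ⟨fun n => φ (Pi.single n 1), ?_, ?_⟩
  · intro h0
    apply hφ
    apply LinearMap.ext
    intro v
    rw [dual_rep φ v]
    simp only [LinearMap.zero_apply]
    refine Finset.sum_eq_zero fun n _ => ?_
    have := congrFun h0 n
    simp only [Pi.zero_apply] at this
    rw [this, zero_mul]
  · intro v hv
    have hφv : φ v = 0 := by
      have hm : φ v ∈ Submodule.map φ (Submodule.span ℝ S) :=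
        ⟨v, Submodule.subset_span hv, rfl⟩
      rw [hker] at hm
      simpa using hm
    rw [← dual_rep φ v, hφv]

lemma ann_of_span_top {N : ℕ} (S : Set (Fin N → ℝ))
    (hS : Submodule.span ℝ S = ⊤) (a : Fin N → ℝ)
    (h : ∀ v ∈ S, ∑ n, a n * v n = 0) : a = 0 := by
  have hk : Submodule.span ℝ S ≤ LinearMap.ker (phiA a) := by
    rw [Submodule.span_le]
    intro v hv
    simp [LinearMap.mem_ker, phiA_apply, h v hv]
  rw [hS] at hk
  funext n
  have h1 : phiA a ((Pi.single n 1 : Fin N → ℝ)) = 0 := by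
    have h0 : phiA a = 0 := LinearMap.ker_eq_top.mp (top_le_iff.mp hk)
    rw [h0]; rfl
  rw [phiA_single] at h1
  simpa using h1

/-- matrix functional M ↦ ∑ n n', a n * b n' * M n n' -/
noncomputable def matFun {N : ℕ} (a b : Fin N → ℝ) :
    Matrix (Fin N) (Fin N) ℝ →ₗ[ℝ] ℝ where
  toFun M := ∑ n, ∑ n', a n * b n' * M n n'
  map_add' M M' := by
    simp [Matrix.add_apply, mul_add, Finset.sum_add_distrib]
  map_smul' c M := by
    simp only [Matrix.smul_apply, smul_eq_mul, RingHom.id_apply, Finset.mul_sum]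
    refine Finset.sum_congr rfl fun n _ => Finset.sum_congr rfl fun n' _ => by ring

lemma matFun_apply {N : ℕ} (a b : Fin N → ℝ) (M : Matrix (Fin N) (Fin N) ℝ) :
    matFun a b M = ∑ n, ∑ n', a n * b n' * M n n' := rfl

lemma matFun_outer {N : ℕ} (a b u : Fin N → ℝ) :
    matFun a b (Matrix.of fun n n' => u n * u n') =
      (∑ n, a n * u n) * (∑ n, b n * u n) := by
  rw [matFun_apply, Finset.sum_mul]
  refine Finset.sum_congr rfl fun n _ => ?_
  rw [Finset.mul_sum]
  refine Finset.sum_congr rfl fun n' _ => ?_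
  simp only [Matrix.of_apply]
  ring

/-- `V` has the local complement property on `A`: for every `A' ⊆ A` there do not
exist `f, g ∈ V`, both not identically zero on `A`, with `f ≡ 0` on `A'` and
`g ≡ 0` on `A ∖ A'`. -/
def LocalComplementProperty (d : ℕ) (V : Submodule ℝ ((Fin d → ℝ) → ℝ))
    (A : Set (Fin d → ℝ)) : Prop :=
  ∀ A' ⊆ A, ¬ ∃ f ∈ V, ∃ g ∈ V,
    (¬ ∀ x ∈ A, f x = 0) ∧ (¬ ∀ x ∈ A, g x = 0) ∧
    (∀ x ∈ A', f x = 0) ∧ (∀ x ∈ A \ A', g x = 0)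

/-- with `g₁,…,g_N` a basis of `V|_A` and `Γ ⊆ A` a finite set whose
outer products `G(γ)` span the space spanned by `{G(x) : x ∈ A}`, `V` has the local
complement property on `A` iff for every `Γ' ⊆ Γ`, the vectors `(g_n(γ'))_n, γ' ∈ Γ'`
span `ℝ^N` or the vectors `(g_n(γ))_n, γ ∈ Γ ∖ Γ'` span `ℝ^N`. -/
theorem stmt11 (d N : ℕ) (A : Set (Fin d → ℝ))
    (hA : IsOpen A) (hAb : Bornology.IsBounded A)
    (V : Submodule ℝ ((Fin d → ℝ) → ℝ)) (hcont : ∀ f ∈ V, Continuous f)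
    (g : Fin N → ((Fin d → ℝ) → ℝ)) (hgV : ∀ n, g n ∈ V)
    (hspan : ∀ f ∈ V, ∃ a : Fin N → ℝ, ∀ x ∈ A, f x = ∑ n, a n * g n x)
    (hindep : ∀ a : Fin N → ℝ, (∀ x ∈ A, ∑ n, a n * g n x = 0) → a = 0)
    (Γ : Finset (Fin d → ℝ)) (hΓA : ↑Γ ⊆ A)
    (hΓspan : ∀ x ∈ A,
      (Matrix.of fun n n' => g n x * g n' x) ∈
        Submodule.span ℝ {M : Matrix (Fin N) (Fin N) ℝ |
          ∃ γ ∈ Γ, M = Matrix.of fun n n' => g n γ * g n' γ}) :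
    LocalComplementProperty d V A ↔
      ∀ Γ' ⊆ Γ,
        Submodule.span ℝ ((fun γ => fun n => g n γ) '' ↑Γ') = (⊤ : Submodule ℝ (Fin N → ℝ)) ∨
        Submodule.span ℝ ((fun γ => fun n => g n γ) '' ↑(Γ \ Γ')) = (⊤ : Submodule ℝ (Fin N → ℝ)) := by
  classical
  constructor
  · -- LCP → spanning condition
    intro hLCP Γ' hΓ'
    by_contra hcon
    push_neg at hcon
    obtain ⟨h1, h2⟩ := hcon
    obtain ⟨a, ha0, ha⟩ := exists_ann _ h1
    obtain ⟨b, hb0, hb⟩ := exists_ann _ h2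
    set f : (Fin d → ℝ) → ℝ := fun x => ∑ n, a n * g n x with hfdef
    set q : (Fin d → ℝ) → ℝ := fun x => ∑ n, b n * g n x with hqdef
    have hfV : f ∈ V := by
      have : f = ∑ n, a n • g n := by
        funext x; simp [hfdef, Finset.sum_apply]
      rw [this]
      exact Submodule.sum_mem V fun n _ => Submodule.smul_mem V _ (hgV n)
    have hqV : q ∈ V := by
      have : q = ∑ n, b n • g n := by
        funext x; simp [hqdef, Finset.sum_apply]
      rw [this]
      exact Submodule.sum_mem V fun n _ => Submodule.smul_mem V _ (hgV n)
    -- f vanishes on Γ', q on Γ \ Γ'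
    have hfΓ' : ∀ γ ∈ Γ', f γ = 0 := by
      intro γ hγ
      exact ha (fun n => g n γ) ⟨γ, hγ, rfl⟩
    have hqΓ : ∀ γ ∈ Γ, γ ∉ Γ' → q γ = 0 := by
      intro γ hγ hγ'
      exact hb (fun n => g n γ) ⟨γ, by simp [hγ, hγ'], rfl⟩
    -- product vanishes on A
    have key : ∀ x ∈ A, f x * q x = 0 := by
      intro x hx
      have hker : Submodule.span ℝ {M : Matrix (Fin N) (Fin N) ℝ |
          ∃ γ ∈ Γ, M = Matrix.of fun n n' => g n γ * g n' γ} ≤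
          LinearMap.ker (matFun a b) := by
        rw [Submodule.span_le]
        rintro M ⟨γ, hγ, rfl⟩
        have : matFun a b (Matrix.of fun n n' => g n γ * g n' γ) = f γ * q γ :=
          matFun_outer a b (fun n => g n γ)
        rw [SetLike.mem_coe, LinearMap.mem_ker, this]
        by_cases hγ' : γ ∈ Γ'
        · rw [hfΓ' γ hγ', zero_mul]
        · rw [hqΓ γ hγ hγ', mul_zero]
      have := hker (hΓspan x hx)
      rw [LinearMap.mem_ker, matFun_outer a b (fun n => g n x)] at this
      exact this
    -- build the counterexample to LCP
    set A' : Set (Fin d → ℝ) := {x ∈ A | f x = 0} with hA'def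
    refine hLCP A' (fun x hx => hx.1) ⟨f, hfV, q, hqV, ?_, ?_, ?_, ?_⟩
    · intro hall
      exact ha0 (hindep a hall)
    · intro hall
      exact hb0 (hindep b hall)
    · intro x hx
      exact hx.2
    · rintro x ⟨hxA, hxA'⟩
      have hfx : f x ≠ 0 := fun h => hxA' ⟨hxA, h⟩
      exact (mul_eq_zero.mp (key x hxA)).resolve_left hfx
  · -- spanning condition → LCP
    intro hRHS A' hA'
    rintro ⟨f, hfV, q, hqV, hf0, hq0, hfA', hqA⟩
    obtain ⟨a, ha⟩ := hspan f hfV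
    obtain ⟨b, hb⟩ := hspan q hqV
    set Γ'' : Finset (Fin d → ℝ) := Γ.filter (fun γ => f γ = 0) with hΓ''def
    have hsub : Γ'' ⊆ Γ := Finset.filter_subset _ _
    rcases hRHS Γ'' hsub with h | h
    · -- a = 0, so f ≡ 0 on A: contradiction
      apply hf0
      intro x hx
      rw [ha x hx]
      have ha0 : a = 0 := by
        apply ann_of_span_top _ h
        rintro v ⟨γ, hγ, rfl⟩
        rw [Finset.coe_filter] at hγ
        obtain ⟨hγΓ, hfγ⟩ := hγ
        rw [← ha γ (hΓA hγΓ)]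
        exact hfγ
      rw [ha0]
      simp
    · -- b = 0, so q ≡ 0 on A: contradiction
      apply hq0
      intro x hx
      rw [hb x hx]
      have hb0 : b = 0 := by
        apply ann_of_span_top _ h
        rintro v ⟨γ, hγ, rfl⟩
        rw [Finset.coe_sdiff, Set.mem_diff] at hγ
        obtain ⟨hγΓ, hγn⟩ := hγ
        have hγA : γ ∈ A := hΓA hγΓ
        have hfγ : f γ ≠ 0 := by
          intro h0
          exact hγn (by simpa [hΓ''def, Finset.mem_coe, Finset.mem_filter]
            using And.intro (Finset.mem_coe.mp hγΓ) h0)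
        have hγnA' : γ ∉ A' := fun hmem => hfγ (hfA' γ hmem)
        have hq : q γ = 0 := hqA γ ⟨hγA, hγnA'⟩
        rw [← hb γ hγA]
        exact hq
      rw [hb0]
      simp
end

section
/- Let V be a real linear space of functions, A a set, and suppose V has the local complement property on A. Then for any f, g ∈ V with |g(x)| = |f(x)| for all x ∈ A, there exists δ ∈ {−1, 1} such that g(x) = δ f(x) for all x ∈ A. Conversely, if every pair f, g ∈ V with equal magnitudes on A agree up to a global sign on A, then V has the local complement property on A. -/
/-- a real linear space `V` of functions has the local complement
property on `A` if and only if any two members of `V` with equal magnitudes on `A`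
agree up to a global sign on `A`. -/
theorem stmt12 (α : Type*) (V : Submodule ℝ (α → ℝ)) (A : Set α) :
    (∀ A' ⊆ A, ¬ ∃ f ∈ V, ∃ g ∈ V,
      (¬ ∀ x ∈ A, f x = 0) ∧ (¬ ∀ x ∈ A, g x = 0) ∧
      (∀ x ∈ A', f x = 0) ∧ (∀ x ∈ A \ A', g x = 0)) ↔
    (∀ f ∈ V, ∀ g ∈ V, (∀ x ∈ A, |g x| = |f x|) →
      ∃ δ : ℝ, (δ = 1 ∨ δ = -1) ∧ ∀ x ∈ A, g x = δ * f x) := by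
  constructor
  · intro lcp f hf g hg habs
    set A' : Set α := {x ∈ A | (f + g) x = 0} with hA'
    have hsub : A' ⊆ A := fun x hx => hx.1
    have h1 : ∀ x ∈ A', (f + g) x = 0 := fun x hx => hx.2
    have h2 : ∀ x ∈ A \ A', (f - g) x = 0 := by
      intro x hx
      have hxA := hx.1
      have hne : (f + g) x ≠ 0 := fun h => hx.2 ⟨hxA, h⟩
      have key : (f x + g x) * (f x - g x) = 0 := by
        have := habs x hxA
        have := (abs_eq_abs.mp this)
        rcases this with h | h <;> rw [h] <;> ring
      rcases mul_eq_zero.mp key with h | h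
      · exact absurd h hne
      · simpa using h
    have hl := lcp A' hsub
    by_cases hp : ∀ x ∈ A, (f + g) x = 0
    · refine ⟨-1, Or.inr rfl, fun x hx => ?_⟩
      have := hp x hx
      simp only [Pi.add_apply] at this
      linarith
    · have hq : ∀ x ∈ A, (f - g) x = 0 := by
        by_contra hq
        exact hl ⟨f + g, V.add_mem hf hg, f - g, V.sub_mem hf hg, hp, hq, h1, h2⟩
      refine ⟨1, Or.inl rfl, fun x hx => ?_⟩
      have := hq x hx
      simp only [Pi.sub_apply] at this
      linarith
  · intro hsign A' hsub ⟨f, hf, g, hg, hfne, hgne, hfA', hgAc⟩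
    have habs : ∀ x ∈ A, |(f - g) x| = |(f + g) x| := by
      intro x hx
      by_cases hx' : x ∈ A'
      · have := hfA' x hx'
        simp [this, abs_neg]
      · have := hgAc x ⟨hx, hx'⟩
        simp [this]
    obtain ⟨δ, hδ, heq⟩ := hsign (f + g) (V.add_mem hf hg) (f - g) (V.sub_mem hf hg) habs
    rcases hδ with rfl | rfl
    · apply hgne
      intro x hx
      have := heq x hx
      simp only [Pi.sub_apply, Pi.add_apply, one_mul] at this
      linarith
    · apply hfne
      intro x hx
      have := heq x hx
      simp only [Pi.sub_apply, Pi.add_apply] at this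
      linarith
end

section
/- Let V be a real vector space of functions on A, and suppose there exists a finite Γ ⊂ A such that: for every Γ' ⊂ Γ, there is no f ∈ V with f ≢ 0 on A and f(γ') = 0 for all γ' ∈ Γ', or there is no g ∈ V with g ≢ 0 on A and g(γ) = 0 for all γ ∈ Γ∖Γ'; and additionally |f(x)|² is determined on A by the values |f(γ)|², γ ∈ Γ, via |f(x)|² = Σ_{γ∈Γ} d_γ(x)|f(γ)|² for fixed functions d_γ. Then V has the local complement property on A. Conversely, the local complement property on A implies the discrete complement property on such a Γ. -/
/-- `V` has the local complement property on `A`. -/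
def LCPa (α : Type*) (V : Submodule ℝ (α → ℝ)) (A : Set α) : Prop :=
  ∀ A' ⊆ A, ¬ ∃ f ∈ V, ∃ g ∈ V,
    (¬ ∀ x ∈ A, f x = 0) ∧ (¬ ∀ x ∈ A, g x = 0) ∧
    (∀ x ∈ A', f x = 0) ∧ (∀ x ∈ A \ A', g x = 0)

/-- The discrete complement property of `V` on the finite set `Γ` relative to `A`. -/
def DCP (α : Type*) [DecidableEq α] (V : Submodule ℝ (α → ℝ)) (A : Set α) (Γ : Finset α) : Prop :=
  ∀ Γ' ⊆ Γ,
    (¬ ∃ f ∈ V, (¬ ∀ x ∈ A, f x = 0) ∧ ∀ γ ∈ Γ', f γ = 0) ∨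
    (¬ ∃ g ∈ V, (¬ ∀ x ∈ A, g x = 0) ∧ ∀ γ ∈ Γ \ Γ', g γ = 0)

/-- given a finite set `Γ ⊆ A` with the interpolation property
`|f(x)|² = Σ_{γ∈Γ} d_γ(x)|f(γ)|²` on `A`, the discrete complement property on `Γ`
implies the local complement property on `A`; and conversely the local complement
property on `A` implies the discrete complement property on such a `Γ`. -/
theorem stmt15 (α : Type*) [DecidableEq α] (V : Submodule ℝ (α → ℝ)) (A : Set α)
    (Γ : Finset α) (hΓA : ↑Γ ⊆ A) (dco : α → α → ℝ)
    (hinterp : ∀ f ∈ V, ∀ x ∈ A, |f x| ^ 2 = ∑ γ ∈ Γ, dco x γ * |f γ| ^ 2) :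
    (DCP α V A Γ → LCPa α V A) ∧ (LCPa α V A → DCP α V A Γ) := by
  classical
  constructor
  · rintro hdcp A' hA' ⟨f, hfV, g, hgV, hfA, hgA, hfA', hgAc⟩
    set Γ' : Finset α := Γ.filter (fun x => x ∈ A') with hΓ'
    rcases hdcp Γ' (Finset.filter_subset _ _) with h | h
    · exact h ⟨f, hfV, hfA, fun γ hγ => hfA' γ (Finset.mem_filter.mp hγ).2⟩
    · refine h ⟨g, hgV, hgA, fun γ hγ => ?_⟩
      rcases Finset.mem_sdiff.mp hγ with ⟨hγΓ, hγn⟩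
      exact hgAc γ ⟨hΓA hγΓ, fun hm => hγn (Finset.mem_filter.mpr ⟨hγΓ, hm⟩)⟩
  · intro hlcp Γ' hΓ'
    by_contra hcon
    push_neg at hcon
    obtain ⟨⟨f, hfV, hfA, hfΓ'⟩, ⟨g, hgV, hgA, hgΓ⟩⟩ := hcon
    have key : ∀ x ∈ A, f x * g x = 0 := by
      intro x hx
      have hf := hinterp f hfV x hx
      have hg := hinterp g hgV x hx
      have hfg := hinterp (f + g) (V.add_mem hfV hgV) x hx
      have hsplit : ∀ h : α → ℝ, ∑ γ ∈ Γ, dco x γ * |h γ| ^ 2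
          = ∑ γ ∈ Γ \ Γ', dco x γ * |h γ| ^ 2 + ∑ γ ∈ Γ', dco x γ * |h γ| ^ 2 :=
        fun h => (Finset.sum_sdiff hΓ').symm
      rw [hsplit] at hf hg hfg
      have e1 : ∑ γ ∈ Γ', dco x γ * |f γ| ^ 2 = 0 :=
        Finset.sum_eq_zero fun γ hγ => by rw [hfΓ' γ hγ]; simp
      have e2 : ∑ γ ∈ Γ \ Γ', dco x γ * |g γ| ^ 2 = 0 :=
        Finset.sum_eq_zero fun γ hγ => by rw [hgΓ γ hγ]; simp
      have e3 : ∑ γ ∈ Γ \ Γ', dco x γ * |(f + g) γ| ^ 2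
          = ∑ γ ∈ Γ \ Γ', dco x γ * |f γ| ^ 2 :=
        Finset.sum_congr rfl fun γ hγ => by simp [hgΓ γ hγ]
      have e4 : ∑ γ ∈ Γ', dco x γ * |(f + g) γ| ^ 2
          = ∑ γ ∈ Γ', dco x γ * |g γ| ^ 2 :=
        Finset.sum_congr rfl fun γ hγ => by simp [hfΓ' γ hγ]
      rw [e1] at hf
      rw [e2] at hg
      rw [e3, e4] at hfg
      simp only [Pi.add_apply, sq_abs] at hf hg hfg
      have expand : (f x + g x) ^ 2 = f x ^ 2 + 2 * (f x * g x) + g x ^ 2 := by ring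
      linarith [hf, hg, hfg, expand]
    set A' : Set α := {x | x ∈ A ∧ f x = 0} with hA'
    refine hlcp A' (fun x hx => hx.1) ⟨f, hfV, g, hgV, by push_neg; exact hfA, by push_neg; exact hgA, fun x hx => hx.2, ?_⟩
    intro x hx
    rcases hx with ⟨hxA, hxn⟩
    by_cases hfx : f x = 0
    · exact absurd ⟨hxA, hfx⟩ hxn
    · have := key x hxA
      exact (mul_eq_zero.mp this).resolve_left hfx
end

section
/- Let Φ : ℝ → ℝ³ be given by Φ(x) = (1/2)(0,1,1)ᵀ + (0,1,−1)ᵀ x + (1/2)(1,−2,1)ᵀ x³. Then every 3×3 submatrix of the 3×5 matrix (Φ(0), Φ(1/5), Φ(2/5), Φ(3/5), Φ(4/5)) = (1/250)·[[0,1,8,27,64],[125,173,209,221,197],[125,76,33,2,−11]] is nonsingular; consequently the five vectors Φ(m/5), 0 ≤ m ≤ 4, form a phase retrievable frame for ℝ³ (any x ∈ ℝ³ is determined up to sign from |⟨x, Φ(m/5)⟩|, 0 ≤ m ≤ 4). -/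
/-- `Φ(x) = (1/2)(0,1,1)ᵀ + (0,1,−1)ᵀ x + (1/2)(1,−2,1)ᵀ x³`. -/
noncomputable def Φvec (x : ℝ) : Fin 3 → ℝ :=
  ![x ^ 3 / 2, 1 / 2 + x - x ^ 3, 1 / 2 - x + x ^ 3 / 2]

/-- A cubic `a + b x + c x³` (no `x²` term) vanishing at three distinct
nonnegative points must be the zero polynomial. -/
lemma cubic_zero (a b c x1 x2 x3 : ℝ) (h12 : x1 ≠ x2) (h13 : x1 ≠ x3) (h23 : x2 ≠ x3)
    (hx1 : 0 ≤ x1) (hx2 : 0 ≤ x2) (hx3 : 0 ≤ x3)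
    (e1 : a + b * x1 + c * x1 ^ 3 = 0)
    (e2 : a + b * x2 + c * x2 ^ 3 = 0)
    (e3 : a + b * x3 + c * x3 ^ 3 = 0) :
    a = 0 ∧ b = 0 ∧ c = 0 := by
  have hs : 0 < x1 + x2 + x3 := by
    rcases lt_or_eq_of_le hx1 with h1 | h1
    · linarith
    · rcases lt_or_eq_of_le hx2 with h2 | h2
      · linarith
      · exact absurd (h1.symm.trans h2) h12
  have h12' : x1 - x2 ≠ 0 := sub_ne_zero.mpr h12
  have h13' : x1 - x3 ≠ 0 := sub_ne_zero.mpr h13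
  have h23' : x2 - x3 ≠ 0 := sub_ne_zero.mpr h23
  have d1 : b + c * (x1 ^ 2 + x1 * x2 + x2 ^ 2) = 0 := by
    have h : (x1 - x2) * (b + c * (x1 ^ 2 + x1 * x2 + x2 ^ 2)) = 0 := by
      linear_combination e1 - e2
    exact (mul_eq_zero.mp h).resolve_left h12'
  have d2 : b + c * (x1 ^ 2 + x1 * x3 + x3 ^ 2) = 0 := by
    have h : (x1 - x3) * (b + c * (x1 ^ 2 + x1 * x3 + x3 ^ 2)) = 0 := by
      linear_combination e1 - e3
    exact (mul_eq_zero.mp h).resolve_left h13'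
  have hc : c = 0 := by
    have h : (x2 - x3) * ((x1 + x2 + x3) * c) = 0 := by
      linear_combination d1 - d2
    have h' := (mul_eq_zero.mp h).resolve_left h23'
    exact (mul_eq_zero.mp h').resolve_left (ne_of_gt hs)
  have hb : b = 0 := by linear_combination d1 - (x1 ^ 2 + x1 * x2 + x2 ^ 2) * hc
  have ha : a = 0 := by linear_combination e1 - x1 * hb - x1 ^ 3 * hc
  exact ⟨ha, hb, hc⟩

lemma dot_expand (v : Fin 3 → ℝ) (x : ℝ) :
    ∑ n, v n * Φvec x n =
      (v 1 + v 2) / 2 + (v 1 - v 2) * x + (v 0 / 2 - v 1 + v 2 / 2) * x ^ 3 := by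
  simp [Fin.sum_univ_three, Φvec]
  ring

/-- If `v` is orthogonal to three distinct columns, then `v = 0`. -/
lemma key1 (v : Fin 3 → ℝ) (i j k : Fin 5) (hij : i ≠ j) (hik : i ≠ k) (hjk : j ≠ k)
    (hi : ∑ n, v n * Φvec ((i : ℕ) / 5 : ℝ) n = 0)
    (hj : ∑ n, v n * Φvec ((j : ℕ) / 5 : ℝ) n = 0)
    (hk : ∑ n, v n * Φvec ((k : ℕ) / 5 : ℝ) n = 0) :
    v = 0 := by
  rw [dot_expand] at hi hj hk
  have cast_ne : ∀ p q : Fin 5, p ≠ q → ((p : ℕ) / 5 : ℝ) ≠ ((q : ℕ) / 5 : ℝ) := by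
    intro p q hpq h
    apply hpq
    have : (p : ℕ) = (q : ℕ) := by
      field_simp at h
      exact_mod_cast h
    exact Fin.val_injective this
  have H := cubic_zero _ _ _ _ _ _ (cast_ne i j hij) (cast_ne i k hik) (cast_ne j k hjk)
    (by positivity) (by positivity) (by positivity) hi hj hk
  obtain ⟨ha, hb, hc⟩ := H
  funext n
  fin_cases n <;> simp <;> linarith

/-- Any injectively-indexed three columns are linearly independent. -/
lemma keyLI (m : Fin 3 → Fin 5) (hm : Function.Injective m) :
    LinearIndependent ℝ (fun p : Fin 3 => Φvec ((m p : ℕ) / 5 : ℝ)) := by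
  have hB : IsUnit (Matrix.of fun p n : Fin 3 => Φvec ((m p : ℕ) / 5 : ℝ) n) := by
    rw [← Matrix.mulVec_injective_iff_isUnit]
    have h0 : ∀ z : Fin 3 → ℝ,
        (Matrix.of fun p n : Fin 3 => Φvec ((m p : ℕ) / 5 : ℝ) n).mulVec z = 0 → z = 0 := by
      intro z hz
      refine key1 z (m 0) (m 1) (m 2) (hm.ne (by decide)) (hm.ne (by decide))
        (hm.ne (by decide)) ?_ ?_ ?_
      · simpa [Matrix.mulVec, dotProduct, mul_comm] using congrFun hz 0
      · simpa [Matrix.mulVec, dotProduct, mul_comm] using congrFun hz 1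
      · simpa [Matrix.mulVec, dotProduct, mul_comm] using congrFun hz 2
    intro u w huw
    have : u - w = 0 := by
      apply h0
      rw [Matrix.mulVec_sub, huw, sub_self]
    exact sub_eq_zero.mp this
  have := Matrix.linearIndependent_rows_iff_isUnit.mpr hB
  exact this

/-- the matrix `(Φ(0) Φ(1/5) Φ(2/5) Φ(3/5) Φ(4/5))` equals
`(1/250)·[[0,1,8,27,64],[125,173,209,221,197],[125,76,33,2,−11]]`, every `3×3`
submatrix of it is nonsingular (any three of the five columns are linearly
independent), and consequently `Φ(m/5)`, `0 ≤ m ≤ 4`, is a phase retrievable frame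
for `ℝ³`. -/
theorem stmt16 :
    (∀ (n : Fin 3) (m : Fin 5),
      Φvec ((m : ℕ) / 5 : ℝ) n =
        (!![0, 1, 8, 27, 64; 125, 173, 209, 221, 197; 125, 76, 33, 2, -11] :
          Matrix (Fin 3) (Fin 5) ℝ) n m / 250) ∧
    (∀ s : Finset (Fin 5), s.card = 3 →
      LinearIndependent ℝ (fun i : ↥s => Φvec (((i : Fin 5) : ℕ) / 5 : ℝ))) ∧
    (∀ x y : Fin 3 → ℝ,
      (∀ m : Fin 5, |∑ n, x n * Φvec ((m : ℕ) / 5 : ℝ) n| =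
        |∑ n, y n * Φvec ((m : ℕ) / 5 : ℝ) n|) → y = x ∨ y = -x) := by
  refine ⟨?_, ?_, ?_⟩
  · intro n m
    fin_cases n <;> fin_cases m <;> norm_num [Φvec]
  · intro s hs
    have e := s.equivFinOfCardEq hs
    have h := keyLI (fun p => ((e.symm p : ↥s) : Fin 5))
      (Subtype.coe_injective.comp e.symm.injective)
    exact (linearIndependent_equiv e.symm).mp h
  · intro x y h
    classical
    set P : Fin 5 → Prop := fun m =>
      ∑ n, x n * Φvec ((m : ℕ) / 5 : ℝ) n = ∑ n, y n * Φvec ((m : ℕ) / 5 : ℝ) n with hP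
    by_cases hcard : 3 ≤ (Finset.univ.filter P).card
    · obtain ⟨t, hts, htc⟩ := Finset.exists_subset_card_eq hcard
      obtain ⟨a, b, c, hab, hac, hbc, rfl⟩ := Finset.card_eq_three.mp htc
      have hd : ∀ m ∈ ({a, b, c} : Finset (Fin 5)),
          ∑ n, (x n - y n) * Φvec ((m : ℕ) / 5 : ℝ) n = 0 := by
        intro m hm
        have hPm : P m := (Finset.mem_filter.mp (hts hm)).2
        rw [hP] at hPm
        simp only [sub_mul, Finset.sum_sub_distrib, hPm, sub_self]
      have hv := key1 (fun n => x n - y n) a b c hab hac hbc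
        (hd a (by simp)) (hd b (by simp)) (hd c (by simp))
      left
      funext n
      have := congrFun hv n
      simp only [Pi.zero_apply] at this
      linarith
    · have hc2 : 3 ≤ (Finset.univ.filter fun m => ¬ P m).card := by
        have := Finset.card_filter_add_card_filter_not (s := (Finset.univ : Finset (Fin 5))) (p := P)
        simp only [Finset.card_univ, Fintype.card_fin] at this
        omega
      obtain ⟨t, hts, htc⟩ := Finset.exists_subset_card_eq hc2
      obtain ⟨a, b, c, hab, hac, hbc, rfl⟩ := Finset.card_eq_three.mp htc
      have hd : ∀ m ∈ ({a, b, c} : Finset (Fin 5)),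
          ∑ n, (x n + y n) * Φvec ((m : ℕ) / 5 : ℝ) n = 0 := by
        intro m hm
        have hPm : ¬ P m := (Finset.mem_filter.mp (hts hm)).2
        rw [hP] at hPm
        rcases abs_eq_abs.mp (h m) with h' | h'
        · exact absurd h' hPm
        · have hsplit : ∑ n, (x n + y n) * Φvec ((m : ℕ) / 5 : ℝ) n =
              (∑ n, x n * Φvec ((m : ℕ) / 5 : ℝ) n) +
                ∑ n, y n * Φvec ((m : ℕ) / 5 : ℝ) n := by
            rw [← Finset.sum_add_distrib]
            exact Finset.sum_congr rfl fun n _ => add_mul _ _ _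
          rw [hsplit, h', neg_add_cancel]
      have hv := key1 (fun n => x n + y n) a b c hab hac hbc
        (hd a (by simp)) (hd b (by simp)) (hd c (by simp))
      right
      funext n
      have := congrFun hv n
      simp only [Pi.zero_apply] at this
      simp only [Pi.neg_apply]
      linarith
end

section
/- With Φ(x) = (1/2)(0,1,1)ᵀ + (0,1,−1)ᵀ x + (1/2)(1,−2,1)ᵀ x³ on (0,1): the span of {Φ(x) : x ∈ (0,1)} is all of ℝ³, and the span of the outer products {Φ(x)Φ(x)ᵀ : x ∈ (0,1)} is the full 6-dimensional space of 3×3 real symmetric matrices; however, the five outer products Φ(m/5)Φ(m/5)ᵀ, 0 ≤ m ≤ 4, do not span this 6-dimensional space (since 5 < 6). -/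
set_option maxHeartbeats 2000000


/-- The outer product `Φ(x)Φ(x)ᵀ`. -/
noncomputable def outerΦ (x : ℝ) : Matrix (Fin 3) (Fin 3) ℝ :=
  Matrix.of fun i j => Φvec x i * Φvec x j

/-- The submodule of symmetric `3×3` real matrices. -/
def SymmSub : Submodule ℝ (Matrix (Fin 3) (Fin 3) ℝ) where
  carrier := {M | M.transpose = M}
  add_mem' := by
    intro a b ha hb
    simp only [Set.mem_setOf_eq, Matrix.transpose_add] at *
    rw [ha, hb]
  zero_mem' := by simp
  smul_mem' := by
    intro r a ha
    simp only [Set.mem_setOf_eq, Matrix.transpose_smul] at *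
    rw [ha]


/-- Standard basis of the symmetric `3×3` matrices. -/
noncomputable def Bmat : Fin 6 → Matrix (Fin 3) (Fin 3) ℝ :=
  ![!![1,0,0;0,0,0;0,0,0], !![0,0,0;0,1,0;0,0,0], !![0,0,0;0,0,0;0,0,1],
    !![0,1,0;1,0,0;0,0,0], !![0,0,1;0,0,0;1,0,0], !![0,0,0;0,0,1;0,1,0]]

lemma Bmat0 : Bmat 0 = !![1,0,0;0,0,0;0,0,0] := rfl
lemma Bmat1 : Bmat 1 = !![0,0,0;0,1,0;0,0,0] := rfl
lemma Bmat2 : Bmat 2 = !![0,0,0;0,0,0;0,0,1] := rfl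
lemma Bmat3 : Bmat 3 = !![0,1,0;1,0,0;0,0,0] := rfl
lemma Bmat4 : Bmat 4 = !![0,0,1;0,0,0;1,0,0] := rfl
lemma Bmat5 : Bmat 5 = !![0,0,0;0,0,1;0,1,0] := rfl

lemma mem_SymmSub {M : Matrix (Fin 3) (Fin 3) ℝ} : M ∈ SymmSub ↔ M.transpose = M := Iff.rfl

lemma Bmat_li : LinearIndependent ℝ Bmat := by
  rw [Fintype.linearIndependent_iff]
  intro g h
  rw [Fin.sum_univ_six] at h
  have hij : ∀ i j : Fin 3,
      (g 0 • Bmat 0 + g 1 • Bmat 1 + g 2 • Bmat 2 + g 3 • Bmat 3 + g 4 • Bmat 4 + g 5 • Bmat 5) i j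
        = (0 : Matrix (Fin 3) (Fin 3) ℝ) i j := fun i j => by rw [h]
  intro i
  fin_cases i
  · simpa [Bmat0, Bmat1, Bmat2, Bmat3, Bmat4, Bmat5, Matrix.add_apply, Matrix.smul_apply] using hij 0 0
  · simpa [Bmat0, Bmat1, Bmat2, Bmat3, Bmat4, Bmat5, Matrix.add_apply, Matrix.smul_apply] using hij 1 1
  · simpa [Bmat0, Bmat1, Bmat2, Bmat3, Bmat4, Bmat5, Matrix.add_apply, Matrix.smul_apply] using hij 2 2
  · simpa [Bmat0, Bmat1, Bmat2, Bmat3, Bmat4, Bmat5, Matrix.add_apply, Matrix.smul_apply] using hij 0 1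
  · simpa [Bmat0, Bmat1, Bmat2, Bmat3, Bmat4, Bmat5, Matrix.add_apply, Matrix.smul_apply] using hij 0 2
  · simpa [Bmat0, Bmat1, Bmat2, Bmat3, Bmat4, Bmat5, Matrix.add_apply, Matrix.smul_apply] using hij 1 2

lemma SymmSub_eq_span : SymmSub = Submodule.span ℝ (Set.range Bmat) := by
  apply le_antisymm
  · intro M hM
    rw [mem_SymmSub] at hM
    have h10 : M 1 0 = M 0 1 := congrFun (congrFun hM 0) 1
    have h20 : M 2 0 = M 0 2 := congrFun (congrFun hM 0) 2
    have h21 : M 2 1 = M 1 2 := congrFun (congrFun hM 1) 2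
    have hMeq : M = M 0 0 • Bmat 0 + M 1 1 • Bmat 1 + M 2 2 • Bmat 2
        + M 0 1 • Bmat 3 + M 0 2 • Bmat 4 + M 1 2 • Bmat 5 := by
      ext i j
      fin_cases i <;> fin_cases j <;>
        simp [Bmat0, Bmat1, Bmat2, Bmat3, Bmat4, Bmat5, Matrix.add_apply, Matrix.smul_apply,
          Matrix.vecHead, Matrix.vecTail, h10, h20, h21]
    rw [hMeq]
    have hB : ∀ k : Fin 6, Bmat k ∈ Submodule.span ℝ (Set.range Bmat) :=
      fun k => Submodule.subset_span ⟨k, rfl⟩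
    exact add_mem (add_mem (add_mem (add_mem (add_mem (Submodule.smul_mem _ _ (hB 0))
      (Submodule.smul_mem _ _ (hB 1))) (Submodule.smul_mem _ _ (hB 2)))
      (Submodule.smul_mem _ _ (hB 3))) (Submodule.smul_mem _ _ (hB 4)))
      (Submodule.smul_mem _ _ (hB 5))
  · rw [Submodule.span_le]
    rintro _ ⟨i, rfl⟩
    rw [SetLike.mem_coe, mem_SymmSub]
    fin_cases i <;> (ext i j; fin_cases i <;> fin_cases j <;> rfl)

/-- the vectors `Φ(x)`, `x ∈ (0,1)`, span `ℝ³`; the outer products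
`Φ(x)Φ(x)ᵀ`, `x ∈ (0,1)`, span the full 6-dimensional space of `3×3` symmetric
matrices; but the five outer products `Φ(m/5)Φ(m/5)ᵀ`, `0 ≤ m ≤ 4`, do not span
that space. -/
theorem stmt17 :
    Submodule.span ℝ (Φvec '' Set.Ioo (0 : ℝ) 1) = (⊤ : Submodule ℝ (Fin 3 → ℝ)) ∧
    Submodule.span ℝ (outerΦ '' Set.Ioo (0 : ℝ) 1) = SymmSub ∧
    Module.finrank ℝ ↥SymmSub = 6 ∧
    Submodule.span ℝ (Set.range fun m : Fin 5 => outerΦ ((m : ℕ) / 5 : ℝ)) ≠ SymmSub := by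
  have hΦ : ∀ x : ℝ, x ∈ Set.Ioo (0:ℝ) 1 →
      Φvec x ∈ Submodule.span ℝ (Φvec '' Set.Ioo (0:ℝ) 1) :=
    fun x hx => Submodule.subset_span ⟨x, hx, rfl⟩
  have hO : ∀ x : ℝ, x ∈ Set.Ioo (0:ℝ) 1 →
      outerΦ x ∈ Submodule.span ℝ (outerΦ '' Set.Ioo (0:ℝ) 1) :=
    fun x hx => Submodule.subset_span ⟨x, hx, rfl⟩
  have part1 : Submodule.span ℝ (Φvec '' Set.Ioo (0:ℝ) 1) = (⊤ : Submodule ℝ (Fin 3 → ℝ)) := by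
    rw [eq_top_iff, ← (Pi.basisFun ℝ (Fin 3)).span_eq, Submodule.span_le]
    rintro _ ⟨i, rfl⟩
    fin_cases i
    · show (Pi.basisFun ℝ (Fin 3)) 0 ∈ (Submodule.span ℝ (Φvec '' Set.Ioo (0:ℝ) 1) : Set _)
      have he : (Pi.basisFun ℝ (Fin 3)) 0 = ((-31/3) : ℝ) • Φvec (1/2 : ℝ) + ((11/3) : ℝ) • Φvec (1/4 : ℝ) + ((23/3) : ℝ) • Φvec (3/4 : ℝ) := by
        funext j
        fin_cases j <;> (simp [Φvec, Pi.basisFun_apply]; norm_num)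
      rw [he]
      exact add_mem (add_mem (Submodule.smul_mem _ _ (hΦ _ (by norm_num))) (Submodule.smul_mem _ _ (hΦ _ (by norm_num)))) (Submodule.smul_mem _ _ (hΦ _ (by norm_num)))
    · show (Pi.basisFun ℝ (Fin 3)) 1 ∈ (Submodule.span ℝ (Φvec '' Set.Ioo (0:ℝ) 1) : Set _)
      have he : (Pi.basisFun ℝ (Fin 3)) 1 = ((7/3) : ℝ) • Φvec (1/2 : ℝ) + ((-2/3) : ℝ) • Φvec (1/4 : ℝ) + ((-2/3) : ℝ) • Φvec (3/4 : ℝ) := by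
        funext j
        fin_cases j <;> (simp [Φvec, Pi.basisFun_apply]; norm_num)
      rw [he]
      exact add_mem (add_mem (Submodule.smul_mem _ _ (hΦ _ (by norm_num))) (Submodule.smul_mem _ _ (hΦ _ (by norm_num)))) (Submodule.smul_mem _ _ (hΦ _ (by norm_num)))
    · show (Pi.basisFun ℝ (Fin 3)) 2 ∈ (Submodule.span ℝ (Φvec '' Set.Ioo (0:ℝ) 1) : Set _)
      have he : (Pi.basisFun ℝ (Fin 3)) 2 = ((-19/3) : ℝ) • Φvec (1/2 : ℝ) + ((17/3) : ℝ) • Φvec (1/4 : ℝ) + ((5/3) : ℝ) • Φvec (3/4 : ℝ) := by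
        funext j
        fin_cases j <;> (simp [Φvec, Pi.basisFun_apply]; norm_num)
      rw [he]
      exact add_mem (add_mem (Submodule.smul_mem _ _ (hΦ _ (by norm_num))) (Submodule.smul_mem _ _ (hΦ _ (by norm_num)))) (Submodule.smul_mem _ _ (hΦ _ (by norm_num)))
  have part3 : Module.finrank ℝ ↥SymmSub = 6 := by
    rw [SymmSub_eq_span, finrank_span_eq_card Bmat_li]
    simp
  have part2 : Submodule.span ℝ (outerΦ '' Set.Ioo (0:ℝ) 1) = SymmSub := by
    apply le_antisymm
    · rw [Submodule.span_le]
      rintro _ ⟨x, hx, rfl⟩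
      rw [SetLike.mem_coe, mem_SymmSub]
      ext i j
      simp [outerΦ, mul_comm]
    · rw [SymmSub_eq_span, Submodule.span_le]
      rintro _ ⟨i, rfl⟩
      fin_cases i
      · show Bmat 0 ∈ (Submodule.span ℝ (outerΦ '' Set.Ioo (0:ℝ) 1) : Set _)
        have hBk : Bmat 0 = ((-73724/81) : ℝ) • outerΦ (1/2 : ℝ) + ((113117/40) : ℝ) • outerΦ (1/3 : ℝ) + ((-538544/135) : ℝ) • outerΦ (1/4 : ℝ) + ((35681/140) : ℝ) • outerΦ (2/3 : ℝ) + ((-59888/1485) : ℝ) • outerΦ (3/4 : ℝ) + ((92703125/49896) : ℝ) • outerΦ (1/5 : ℝ) := by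
          ext i j
          fin_cases i <;> fin_cases j <;>
            (simp [Bmat0, Bmat1, Bmat2, Bmat3, Bmat4, Bmat5, outerΦ, Φvec, Matrix.add_apply, Matrix.smul_apply, Matrix.vecHead, Matrix.vecTail]; norm_num)
        rw [hBk]
        exact add_mem (add_mem (add_mem (add_mem (add_mem (Submodule.smul_mem _ _ (hO _ (by norm_num))) (Submodule.smul_mem _ _ (hO _ (by norm_num)))) (Submodule.smul_mem _ _ (hO _ (by norm_num)))) (Submodule.smul_mem _ _ (hO _ (by norm_num)))) (Submodule.smul_mem _ _ (hO _ (by norm_num)))) (Submodule.smul_mem _ _ (hO _ (by norm_num)))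
      · show Bmat 1 ∈ (Submodule.span ℝ (outerΦ '' Set.Ioo (0:ℝ) 1) : Set _)
        have hBk : Bmat 1 = ((-4532/27) : ℝ) • outerΦ (1/2 : ℝ) + ((3621/8) : ℝ) • outerΦ (1/3 : ℝ) + ((-27632/45) : ℝ) • outerΦ (1/4 : ℝ) + ((10329/140) : ℝ) • outerΦ (2/3 : ℝ) + ((-2416/99) : ℝ) • outerΦ (3/4 : ℝ) + ((4671875/16632) : ℝ) • outerΦ (1/5 : ℝ) := by
          ext i j
          fin_cases i <;> fin_cases j <;>
            (simp [Bmat0, Bmat1, Bmat2, Bmat3, Bmat4, Bmat5, outerΦ, Φvec, Matrix.add_apply, Matrix.smul_apply, Matrix.vecHead, Matrix.vecTail]; norm_num)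
        rw [hBk]
        exact add_mem (add_mem (add_mem (add_mem (add_mem (Submodule.smul_mem _ _ (hO _ (by norm_num))) (Submodule.smul_mem _ _ (hO _ (by norm_num)))) (Submodule.smul_mem _ _ (hO _ (by norm_num)))) (Submodule.smul_mem _ _ (hO _ (by norm_num)))) (Submodule.smul_mem _ _ (hO _ (by norm_num)))) (Submodule.smul_mem _ _ (hO _ (by norm_num)))
      · show Bmat 2 ∈ (Submodule.span ℝ (outerΦ '' Set.Ioo (0:ℝ) 1) : Set _)
        have hBk : Bmat 2 = ((-28780/81) : ℝ) • outerΦ (1/2 : ℝ) + ((40957/40) : ℝ) • outerΦ (1/3 : ℝ) + ((-199792/135) : ℝ) • outerΦ (1/4 : ℝ) + ((21193/140) : ℝ) • outerΦ (2/3 : ℝ) + ((-73648/1485) : ℝ) • outerΦ (3/4 : ℝ) + ((35453125/49896) : ℝ) • outerΦ (1/5 : ℝ) := by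
          ext i j
          fin_cases i <;> fin_cases j <;>
            (simp [Bmat0, Bmat1, Bmat2, Bmat3, Bmat4, Bmat5, outerΦ, Φvec, Matrix.add_apply, Matrix.smul_apply, Matrix.vecHead, Matrix.vecTail]; norm_num)
        rw [hBk]
        exact add_mem (add_mem (add_mem (add_mem (add_mem (Submodule.smul_mem _ _ (hO _ (by norm_num))) (Submodule.smul_mem _ _ (hO _ (by norm_num)))) (Submodule.smul_mem _ _ (hO _ (by norm_num)))) (Submodule.smul_mem _ _ (hO _ (by norm_num)))) (Submodule.smul_mem _ _ (hO _ (by norm_num)))) (Submodule.smul_mem _ _ (hO _ (by norm_num)))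
      · show Bmat 3 ∈ (Submodule.span ℝ (outerΦ '' Set.Ioo (0:ℝ) 1) : Set _)
        have hBk : Bmat 3 = ((111896/81) : ℝ) • outerΦ (1/2 : ℝ) + ((-75307/20) : ℝ) • outerΦ (1/3 : ℝ) + ((692096/135) : ℝ) • outerΦ (1/4 : ℝ) + ((-40477/70) : ℝ) • outerΦ (2/3 : ℝ) + ((25216/135) : ℝ) • outerΦ (3/4 : ℝ) + ((-5328125/2268) : ℝ) • outerΦ (1/5 : ℝ) := by
          ext i j
          fin_cases i <;> fin_cases j <;>
            (simp [Bmat0, Bmat1, Bmat2, Bmat3, Bmat4, Bmat5, outerΦ, Φvec, Matrix.add_apply, Matrix.smul_apply, Matrix.vecHead, Matrix.vecTail]; norm_num)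
        rw [hBk]
        exact add_mem (add_mem (add_mem (add_mem (add_mem (Submodule.smul_mem _ _ (hO _ (by norm_num))) (Submodule.smul_mem _ _ (hO _ (by norm_num)))) (Submodule.smul_mem _ _ (hO _ (by norm_num)))) (Submodule.smul_mem _ _ (hO _ (by norm_num)))) (Submodule.smul_mem _ _ (hO _ (by norm_num)))) (Submodule.smul_mem _ _ (hO _ (by norm_num)))
      · show Bmat 4 ∈ (Submodule.span ℝ (outerΦ '' Set.Ioo (0:ℝ) 1) : Set _)
        have hBk : Bmat 4 = ((76376/9) : ℝ) • outerΦ (1/2 : ℝ) + ((-431307/20) : ℝ) • outerΦ (1/3 : ℝ) + ((429536/15) : ℝ) • outerΦ (1/4 : ℝ) + ((-273843/70) : ℝ) • outerΦ (2/3 : ℝ) + ((19744/15) : ℝ) • outerΦ (3/4 : ℝ) + ((-3265625/252) : ℝ) • outerΦ (1/5 : ℝ) := by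
          ext i j
          fin_cases i <;> fin_cases j <;>
            (simp [Bmat0, Bmat1, Bmat2, Bmat3, Bmat4, Bmat5, outerΦ, Φvec, Matrix.add_apply, Matrix.smul_apply, Matrix.vecHead, Matrix.vecTail]; norm_num)
        rw [hBk]
        exact add_mem (add_mem (add_mem (add_mem (add_mem (Submodule.smul_mem _ _ (hO _ (by norm_num))) (Submodule.smul_mem _ _ (hO _ (by norm_num)))) (Submodule.smul_mem _ _ (hO _ (by norm_num)))) (Submodule.smul_mem _ _ (hO _ (by norm_num)))) (Submodule.smul_mem _ _ (hO _ (by norm_num)))) (Submodule.smul_mem _ _ (hO _ (by norm_num)))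
      · show Bmat 5 ∈ (Submodule.span ℝ (outerΦ '' Set.Ioo (0:ℝ) 1) : Set _)
        have hBk : Bmat 5 = ((38152/81) : ℝ) • outerΦ (1/2 : ℝ) + ((-26123/20) : ℝ) • outerΦ (1/3 : ℝ) + ((245056/135) : ℝ) • outerΦ (1/4 : ℝ) + ((-14297/70) : ℝ) • outerΦ (2/3 : ℝ) + ((99904/1485) : ℝ) • outerΦ (3/4 : ℝ) + ((-20984375/24948) : ℝ) • outerΦ (1/5 : ℝ) := by
          ext i j
          fin_cases i <;> fin_cases j <;>
            (simp [Bmat0, Bmat1, Bmat2, Bmat3, Bmat4, Bmat5, outerΦ, Φvec, Matrix.add_apply, Matrix.smul_apply, Matrix.vecHead, Matrix.vecTail]; norm_num)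
        rw [hBk]
        exact add_mem (add_mem (add_mem (add_mem (add_mem (Submodule.smul_mem _ _ (hO _ (by norm_num))) (Submodule.smul_mem _ _ (hO _ (by norm_num)))) (Submodule.smul_mem _ _ (hO _ (by norm_num)))) (Submodule.smul_mem _ _ (hO _ (by norm_num)))) (Submodule.smul_mem _ _ (hO _ (by norm_num)))) (Submodule.smul_mem _ _ (hO _ (by norm_num)))
  refine ⟨part1, part2, part3, ?_⟩
  intro h
  have h5 : Module.finrank ℝ
      ↥(Submodule.span ℝ (Set.range fun m : Fin 5 => outerΦ ((m : ℕ) / 5 : ℝ))) ≤ 5 := by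
    refine (finrank_span_le_card _).trans ?_
    have hc := Fintype.card_range_le (fun m : Fin 5 => outerΦ ((m : ℕ) / 5 : ℝ))
    rw [Set.toFinset_range]
    exact Finset.card_image_le.trans (by simp)
  rw [h, part3] at h5
  exact absurd h5 (by norm_num)
end

section
/- Let A be a bounded open set and V a locally finite-dimensional space of continuous signals on ℝ^d having the local complement property on A. If B is a bounded open subset of A such that any two signals g, f ∈ V satisfying |g(x)| = |f(x)| for all x ∈ B necessarily satisfy |g(x)| = |f(x)| for all x ∈ A, then V also has the local complement property on B. -/
/-- let `A` be a bounded open set and `V` a locally finite-dimensional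
space of continuous signals on `ℝ^d` with the local complement property on `A`.  If
`B ⊆ A` is a bounded open subset such that equality of magnitudes of two signals of
`V` on `B` forces equality of their magnitudes on `A`, then `V` also has the local
complement property on `B`. -/
theorem stmt19 (d : ℕ) (V : Submodule ℝ ((Fin d → ℝ) → ℝ))
    (hcont : ∀ f ∈ V, Continuous f)
    (hlocfd : ∀ C : Set (Fin d → ℝ), IsOpen C → Bornology.IsBounded C →
      ∃ (n : ℕ) (g : Fin n → ((Fin d → ℝ) → ℝ)),
        ∀ f ∈ V, ∃ a : Fin n → ℝ, ∀ x ∈ C, f x = ∑ i, a i * g i x)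
    (A B : Set (Fin d → ℝ))
    (hA : IsOpen A) (hAb : Bornology.IsBounded A)
    (hB : IsOpen B) (hBb : Bornology.IsBounded B) (hBA : B ⊆ A)
    (hLCPA : LocalComplementProperty d V A)
    (hmag : ∀ f ∈ V, ∀ g ∈ V, (∀ x ∈ B, |g x| = |f x|) → ∀ x ∈ A, |g x| = |f x|) :
    LocalComplementProperty d V B := by
  intro B' hB'B
  rintro ⟨f, hfV, g, hgV, hf0, hg0, hfB', hgB'⟩
  have hmagB : ∀ x ∈ B, |(f + g) x| = |(f - g) x| := by
    intro x hx
    by_cases hx' : x ∈ B'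
    · simp [hfB' x hx']
    · have : g x = 0 := hgB' x ⟨hx, hx'⟩
      simp [this]
  have hmagA : ∀ x ∈ A, |(f + g) x| = |(f - g) x| :=
    hmag (f - g) (V.sub_mem hfV hgV) (f + g) (V.add_mem hfV hgV) hmagB
  have hprod : ∀ x ∈ A, f x = 0 ∨ g x = 0 := by
    intro x hx
    have h := hmagA x hx
    simp only [Pi.add_apply, Pi.sub_apply] at h
    have h2 : (f x + g x) ^ 2 = (f x - g x) ^ 2 := by
      rw [← sq_abs (f x + g x), ← sq_abs (f x - g x), h]
    have : f x * g x = 0 := by nlinarith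
    exact mul_eq_zero.mp this
  refine hLCPA {x ∈ A | f x = 0} (Set.sep_subset _ _)
    ⟨f, hfV, g, hgV, ?_, ?_, ?_, ?_⟩
  · exact fun h => hf0 fun x hx => h x (hBA hx)
  · exact fun h => hg0 fun x hx => h x (hBA hx)
  · exact fun x hx => hx.2
  · rintro x ⟨hxA, hx'⟩
    rcases hprod x hxA with h | h
    · exact absurd ⟨hxA, h⟩ hx'
    · exact h
end
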